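/- arXiv:0707.2985 — 14 statements merged into one kernel-verified Lean document; each statement's English description precedes it below -/
import Mathlib

section
/- For a nonincreasing sequence ξ of positive reals with ξ_1 = 1, the sequence ξ can be reconstructed from its ratio of regularity r = r(ξ) by: ξ_1 = 1 and ξ_n = (1/(n·r_n)) · ∏_{j=2}^n (1 + 1/(j·r_j − 1)) for n > 1. -/
open Finset Filter Real

/-- First-order arithmetic mean: (ξ_a)_n = (1/n) ∑_{j=1}^n ξ_j. -/
noncomputable def am (ξ : ℕ → ℝ) (n : ℕ) : ℝ := (∑ j ∈ Finset.Icc 1 n, ξ j) / n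

/-- Second-order arithmetic mean. -/
noncomputable def am2 (ξ : ℕ → ℝ) : ℕ → ℝ := am (am ξ)

/-- Harmonic numbers H_n = ∑_{j=1}^n 1/j. -/
noncomputable def harm (n : ℕ) : ℝ := ∑ j ∈ Finset.Icc 1 n, (1 : ℝ) / j

theorem stmt_1 (ξ : ℕ → ℝ)
    (hmono : ∀ n : ℕ, 1 ≤ n → ξ (n + 1) ≤ ξ n)
    (hpos : ∀ n : ℕ, 1 ≤ n → 0 < ξ n)
    (h1 : ξ 1 = 1) :
    ∀ n : ℕ, 1 < n →
      ξ n = (1 / ((n : ℝ) * (am ξ n / ξ n))) *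
        ∏ j ∈ Finset.Icc 2 n, (1 + 1 / ((j : ℝ) * (am ξ j / ξ j) - 1)) := by
  intro n hn
  set S : ℕ → ℝ := fun m => ∑ j ∈ Finset.Icc 1 m, ξ j with hS
  have hSpos : ∀ m : ℕ, 1 ≤ m → 0 < S m := by
    intro m hm
    apply Finset.sum_pos
    · intro i hi; exact hpos i (Finset.mem_Icc.mp hi).1
    · exact ⟨1, Finset.mem_Icc.mpr ⟨le_refl 1, hm⟩⟩
  have hS1 : S 1 = 1 := by simp [hS, h1]
  have hmul : ∀ m : ℕ, 1 ≤ m → (m : ℝ) * (am ξ m / ξ m) = S m / ξ m := by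
    intro m hm
    have hm0 : (m : ℝ) ≠ 0 := by positivity
    have hξ := (hpos m hm).ne'
    unfold am
    simp only [hS]
    field_simp
  have key : ∀ m : ℕ, 1 ≤ m →
      ∏ j ∈ Finset.Icc 2 m, (1 + 1 / ((j : ℝ) * (am ξ j / ξ j) - 1)) = S m := by
    intro m hm
    induction m with
    | zero => omega
    | succ k ih =>
      rcases Nat.lt_or_ge k 1 with hk | hk
      · interval_cases k
        simp [hS1]
      · have hkpos := hSpos k hk
        have hξpos := hpos (k + 1) (by omega)
        have hSsucc : S (k + 1) = S k + ξ (k + 1) := by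
          simp [hS, Finset.sum_Icc_succ_top (by omega : 1 ≤ k + 1)]
        rw [Finset.prod_Icc_succ_top (by omega : 2 ≤ k + 1), ih hk,
          hmul (k + 1) (by omega)]
        push_cast
        rw [hSsucc]
        have h2 : (S k + ξ (k + 1)) / ξ (k + 1) - 1 = S k / ξ (k + 1) := by
          field_simp
          ring
        rw [h2]
        field_simp
  have hnpos : (1 : ℕ) ≤ n := by omega
  rw [key n hnpos, hmul n hnpos]
  have hξ := hpos n hnpos
  have hSn := hSpos n hnpos
  field_simp
end

section
/- Let r : ℕ → ℝ satisfy r_1 = 1 and (n+1)r_{n+1} ≥ n·r_n + 1 for all n, and define ξ by ξ_1 = 1 and ξ_n = (1/(n·r_n)) ∏_{j=2}^n (1 + 1/(j·r_j − 1)) for n > 1. Then ξ is nonincreasing, and ξ_n → 0 if and only if log r_n + ∑_{j=2}^n (1/j)(1 − 1/r_j) → ∞. -/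
open Finset Filter Real

lemma tele_sum (g : ℕ → ℝ) : ∀ n : ℕ, 1 ≤ n →
    ∑ j ∈ Finset.Icc 2 n, (g j - g (j - 1)) = g n - g 1 := by
  intro n hn
  induction n with
  | zero => omega
  | succ m ih =>
    rcases Nat.lt_or_ge m 1 with h | h
    · interval_cases m
      · simp
    · rw [Finset.sum_Icc_succ_top (by omega), ih h]
      simp

lemma log_gap_bounds {a : ℝ} (ha : 2 ≤ a) :
    1 / a ≤ Real.log a - Real.log (a - 1) ∧ Real.log a - Real.log (a - 1) ≤ 1 / (a - 1) := by
  have h1 : (0:ℝ) < a - 1 := by linarith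
  have h0 : (0:ℝ) < a := by linarith
  constructor
  · have := Real.log_le_sub_one_of_pos (x := (a-1)/a) (by positivity)
    rw [Real.log_div (by linarith) (by linarith)] at this
    have : Real.log (a-1) - Real.log a ≤ (a-1)/a - 1 := this
    have h2 : (a-1)/a - 1 = -(1/a) := by field_simp; ring
    linarith [this, h2.symm ▸ this]
  · have := Real.log_le_sub_one_of_pos (x := a/(a-1)) (by positivity)
    rw [Real.log_div (by linarith) (by linarith)] at this
    have h2 : a/(a-1) - 1 = 1/(a-1) := by field_simp; ring
    linarith

lemma tele_inv (n : ℕ) : ∑ j ∈ Finset.Icc 2 n, (1/((j:ℝ)-1) - 1/(j:ℝ)) ≤ 1 := by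
  have h := tele_sum (fun j => -(1/(j:ℝ))) n
  rcases Nat.lt_or_ge n 1 with h1 | h1
  · interval_cases n; simp
  · have heq : ∑ j ∈ Finset.Icc 2 n, (1/((j:ℝ)-1) - 1/(j:ℝ))
        = ∑ j ∈ Finset.Icc 2 n, ((fun j : ℕ => -(1/(j:ℝ))) j - (fun j : ℕ => -(1/(j:ℝ))) (j-1)) := by
      apply Finset.sum_congr rfl
      intro j hj
      simp only [Finset.mem_Icc] at hj
      have : ((j - 1 : ℕ) : ℝ) = (j:ℝ) - 1 := by
        have : 1 ≤ j := by omega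
        push_cast [Nat.cast_sub this]
        ring
      simp only [this]
      ring
    rw [heq, h h1]
    have : (0:ℝ) < n := by exact_mod_cast h1
    simp only [Nat.cast_one]
    have h2 : 0 < 1/(n:ℝ) := by positivity
    linarith

theorem stmt_2 (r ξ : ℕ → ℝ)
    (hr1 : r 1 = 1)
    (hrec : ∀ n : ℕ, 1 ≤ n → ((n : ℝ) + 1) * r (n + 1) ≥ (n : ℝ) * r n + 1)
    (hxi1 : ξ 1 = 1)
    (hxi : ∀ n : ℕ, 1 < n →
      ξ n = (1 / ((n : ℝ) * r n)) * ∏ j ∈ Finset.Icc 2 n, (1 + 1 / ((j : ℝ) * r j - 1))) :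
    (∀ n : ℕ, 1 ≤ n → ξ (n + 1) ≤ ξ n) ∧
    (Tendsto ξ atTop (nhds 0) ↔
      Tendsto (fun n => Real.log (r n) + ∑ j ∈ Finset.Icc 2 n, (1 / (j : ℝ)) * (1 - 1 / r j))
        atTop atTop) := by
  -- basic facts
  have ha : ∀ n : ℕ, 1 ≤ n → (n : ℝ) ≤ (n:ℝ) * r n := by
    intro n hn
    induction n with
    | zero => omega
    | succ m ih =>
      rcases Nat.lt_or_ge m 1 with h | h
      · interval_cases m
        simp [hr1]
      · have h1 := hrec m h
        have h2 := ih h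
        have h3 : (1:ℝ) ≤ m := by exact_mod_cast h
        push_cast
        linarith
  have ha2 : ∀ j : ℕ, 2 ≤ j → (2:ℝ) ≤ (j:ℝ) * r j := by
    intro j hj
    have h1 := ha j (by omega)
    have h2 : (2:ℝ) ≤ (j:ℝ) := by exact_mod_cast hj
    linarith
  have hrpos : ∀ n : ℕ, 1 ≤ n → 0 < r n := by
    intro n hn
    have h1 := ha n hn
    have h2 : (0:ℝ) < n := by exact_mod_cast hn
    nlinarith
  have hfacpos : ∀ j : ℕ, 2 ≤ j → 0 < 1 + 1 / ((j : ℝ) * r j - 1) := by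
    intro j hj
    have := ha2 j hj
    have h1 : (0:ℝ) < (j:ℝ) * r j - 1 := by linarith
    positivity
  have hP : ∀ n : ℕ, 0 < ∏ j ∈ Finset.Icc 2 n, (1 + 1 / ((j : ℝ) * r j - 1)) := by
    intro n
    apply Finset.prod_pos
    intro j hj
    exact hfacpos j (Finset.mem_Icc.mp hj).1
  have hxipos : ∀ n : ℕ, 1 ≤ n → 0 < ξ n := by
    intro n hn
    rcases eq_or_lt_of_le hn with h | h
    · rw [← h, hxi1]; norm_num
    · rw [hxi n h]
      have h1 := ha2 n h
      have h2 : (0:ℝ) < (n:ℝ) * r n := by linarith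
      have := hP n
      positivity
  -- monotonicity
  have hmono : ∀ n : ℕ, 1 ≤ n → ξ (n + 1) ≤ ξ n := by
    intro n hn
    rcases eq_or_lt_of_le hn with h | h
    · subst h
      rw [hxi 2 (by norm_num), hxi1]
      rw [show Finset.Icc 2 2 = {2} from Finset.Icc_self 2, Finset.prod_singleton]
      have h1 := ha2 2 (le_refl 2)
      have h1' : (2:ℝ) ≤ ((2:ℕ):ℝ) * r 2 := h1
      set t : ℝ := ((2:ℕ):ℝ) * r 2 with htdef
      have h2 : (0:ℝ) < t - 1 := by linarith
      have h3 : (0:ℝ) < t := by linarith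
      have e : 1 / t * (1 + 1 / (t - 1)) = 1 / (t - 1) := by
        field_simp
        ring
      rw [e, div_le_one h2]
      linarith
    · -- n ≥ 2
      rw [hxi n h, hxi (n+1) (by omega)]
      rw [Finset.prod_Icc_succ_top (by omega)]
      set P := ∏ j ∈ Finset.Icc 2 n, (1 + 1 / ((j : ℝ) * r j - 1)) with hPdef
      have hPpos : 0 < P := hP n
      have hA := ha2 n h
      have hrec' := hrec n hn
      have hcast : ((n+1 : ℕ) : ℝ) = (n:ℝ) + 1 := by push_cast; ring
      rw [hcast]
      set A := (n:ℝ) * r n with hAdef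
      set B := ((n:ℝ) + 1) * r (n+1) with hBdef
      have hB : A + 1 ≤ B := hrec'
      have hB1 : (0:ℝ) < B - 1 := by linarith
      have hA0 : (0:ℝ) < A := by linarith
      have hB0 : (0:ℝ) < B := by linarith
      have e : 1 / B * (P * (1 + 1 / (B - 1))) = P / (B - 1) := by
        field_simp
        ring
      rw [e]
      rw [div_le_iff₀ hB1, one_div, inv_mul_eq_div, div_mul_eq_mul_div, le_div_iff₀ hA0]
      nlinarith
  refine ⟨hmono, ?_⟩
  -- key bound
  set S : ℕ → ℝ := fun n => Real.log (r n) + ∑ j ∈ Finset.Icc 2 n, (1 / (j : ℝ)) * (1 - 1 / r j)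
    with hSdef
  have hkey : ∀ n : ℕ, 2 ≤ n → |S n + Real.log (ξ n)| ≤ 1 := by
    intro n hn
    have hnR : (2:ℝ) ≤ (n:ℝ) := by exact_mod_cast hn
    have hn0 : (0:ℝ) < (n:ℝ) := by linarith
    have hrn : 0 < r n := hrpos n (by omega)
    -- log ξ n
    have hlogxi : Real.log (ξ n) = - Real.log ((n:ℝ) * r n)
        + ∑ j ∈ Finset.Icc 2 n, (Real.log ((j:ℝ) * r j) - Real.log ((j:ℝ) * r j - 1)) := by
      rw [hxi n (by omega)]
      rw [Real.log_mul (by positivity) (ne_of_gt (hP n)), one_div, Real.log_inv]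
      congr 1
      rw [Real.log_prod]
      · apply Finset.sum_congr rfl
        intro j hj
        have hj2 := (Finset.mem_Icc.mp hj).1
        have h1 := ha2 j hj2
        have h2 : (0:ℝ) < (j:ℝ) * r j - 1 := by linarith
        have e : 1 + 1 / ((j:ℝ) * r j - 1) = ((j:ℝ) * r j) / ((j:ℝ) * r j - 1) := by
          field_simp
          ring
        rw [e, Real.log_div (by linarith) (by linarith)]
      · intro j hj
        exact ne_of_gt (hfacpos j (Finset.mem_Icc.mp hj).1)
    -- log r n
    have hlogr : Real.log (r n) = Real.log ((n:ℝ) * r n) - Real.log (n:ℝ) := by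
      rw [Real.log_mul (by positivity) (ne_of_gt hrn)]
      ring
    -- rewrite summands of S
    have hsum1 : ∑ j ∈ Finset.Icc 2 n, (1 / (j : ℝ)) * (1 - 1 / r j)
        = ∑ j ∈ Finset.Icc 2 n, (1 / (j:ℝ) - 1 / ((j:ℝ) * r j)) := by
      apply Finset.sum_congr rfl
      intro j hj
      have hj2 := (Finset.mem_Icc.mp hj).1
      have hjR : (0:ℝ) < (j:ℝ) := by
        have : (2:ℝ) ≤ (j:ℝ) := by exact_mod_cast hj2
        linarith
      have hrj : 0 < r j := hrpos j (by omega)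
      field_simp
    -- telescoping log n
    have htel : ∑ j ∈ Finset.Icc 2 n, (Real.log (j:ℝ) - Real.log ((j:ℝ) - 1)) = Real.log (n:ℝ) := by
      have h := tele_sum (fun j => Real.log (j:ℝ)) n (by omega)
      have heq : ∑ j ∈ Finset.Icc 2 n, (Real.log (j:ℝ) - Real.log ((j:ℝ) - 1))
          = ∑ j ∈ Finset.Icc 2 n,
            ((fun j : ℕ => Real.log (j:ℝ)) j - (fun j : ℕ => Real.log (j:ℝ)) (j-1)) := by
        apply Finset.sum_congr rfl
        intro j hj
        have hj2 := (Finset.mem_Icc.mp hj).1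
        have : ((j - 1 : ℕ) : ℝ) = (j:ℝ) - 1 := by
          have h1 : 1 ≤ j := by omega
          push_cast [Nat.cast_sub h1]
          ring
        simp only [this]
      rw [heq, h]
      simp
    -- put together
    have hid : S n + Real.log (ξ n)
        = ∑ j ∈ Finset.Icc 2 n,
          ((1 / (j:ℝ) - (Real.log (j:ℝ) - Real.log ((j:ℝ) - 1)))
            + (Real.log ((j:ℝ) * r j) - Real.log ((j:ℝ) * r j - 1) - 1 / ((j:ℝ) * r j))) := by
      have hcomb : ∑ j ∈ Finset.Icc 2 n,
            ((1 / (j:ℝ) - (Real.log (j:ℝ) - Real.log ((j:ℝ) - 1)))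
              + (Real.log ((j:ℝ) * r j) - Real.log ((j:ℝ) * r j - 1) - 1 / ((j:ℝ) * r j)))
          = (∑ j ∈ Finset.Icc 2 n, (1 / (j:ℝ) - 1 / ((j:ℝ) * r j)))
            + (∑ j ∈ Finset.Icc 2 n, (Real.log ((j:ℝ) * r j) - Real.log ((j:ℝ) * r j - 1)))
            - (∑ j ∈ Finset.Icc 2 n, (Real.log (j:ℝ) - Real.log ((j:ℝ) - 1))) := by
        rw [← Finset.sum_add_distrib, ← Finset.sum_sub_distrib]
        apply Finset.sum_congr rfl
        intro j _
        ring
      simp only [hSdef]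
      rw [hsum1, hlogxi, hlogr, hcomb, htel]
      ring
    rw [hid]
    calc |∑ j ∈ Finset.Icc 2 n,
          ((1 / (j:ℝ) - (Real.log (j:ℝ) - Real.log ((j:ℝ) - 1)))
            + (Real.log ((j:ℝ) * r j) - Real.log ((j:ℝ) * r j - 1) - 1 / ((j:ℝ) * r j)))|
        ≤ ∑ j ∈ Finset.Icc 2 n,
          |(1 / (j:ℝ) - (Real.log (j:ℝ) - Real.log ((j:ℝ) - 1)))
            + (Real.log ((j:ℝ) * r j) - Real.log ((j:ℝ) * r j - 1) - 1 / ((j:ℝ) * r j))| :=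
          Finset.abs_sum_le_sum_abs _ _
      _ ≤ ∑ j ∈ Finset.Icc 2 n, (1/((j:ℝ)-1) - 1/(j:ℝ)) := by
          apply Finset.sum_le_sum
          intro j hj
          have hj2 := (Finset.mem_Icc.mp hj).1
          have hjR : (2:ℝ) ≤ (j:ℝ) := by exact_mod_cast hj2
          have haj := ha2 j hj2
          have hja : (j:ℝ) ≤ (j:ℝ) * r j := ha j (by omega)
          obtain ⟨l1, l2⟩ := log_gap_bounds hjR
          obtain ⟨m1, m2⟩ := log_gap_bounds haj
          have hd : 1/((j:ℝ)*r j - 1) - 1/((j:ℝ)*r j) ≤ 1/((j:ℝ)-1) - 1/(j:ℝ) := by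
            have e1 : 1/((j:ℝ)*r j - 1) - 1/((j:ℝ)*r j) = 1/(((j:ℝ)*r j) * ((j:ℝ)*r j - 1)) := by
              have : (0:ℝ) < (j:ℝ)*r j - 1 := by linarith
              have hrj : r j ≠ 0 := (hrpos j (by omega)).ne'
              field_simp
              ring
            have e2 : 1/((j:ℝ)-1) - 1/(j:ℝ) = 1/((j:ℝ) * ((j:ℝ)-1)) := by
              have : (0:ℝ) < (j:ℝ)-1 := by linarith
              field_simp
              ring
            rw [e1, e2]
            apply one_div_le_one_div_of_le
            · nlinarith
            · nlinarith
          rw [abs_le]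
          constructor
          · linarith
          · linarith
      _ ≤ 1 := tele_inv n
  -- final equivalence
  constructor
  · intro hx
    have h1 : Tendsto ξ atTop (nhdsWithin (0:ℝ) (Set.Ioi 0)) := by
      apply tendsto_nhdsWithin_of_tendsto_nhds_of_eventually_within _ hx
      filter_upwards [eventually_ge_atTop 1] with n hn
      exact hxipos n hn
    have h2 : Tendsto (fun n => Real.log (ξ n)) atTop atBot :=
      Real.tendsto_log_nhdsGT_zero.comp h1
    have h3 : Tendsto (fun n => -1 - Real.log (ξ n)) atTop atTop := by
      have := tendsto_neg_atBot_atTop.comp h2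
      have h4 := tendsto_atTop_add_const_left atTop (-1 : ℝ) this
      refine h4.congr (fun n => ?_)
      simp [Function.comp]
      ring
    apply tendsto_atTop_mono' atTop _ h3
    filter_upwards [eventually_ge_atTop 2] with n hn
    have := abs_le.mp (hkey n hn)
    have hgoal : -1 - Real.log (ξ n) ≤ S n := by linarith [this.1]
    exact hgoal
  · intro hS
    have h2 : Tendsto (fun n => Real.log (ξ n)) atTop atBot := by
      have hbot : Tendsto (fun n => 1 - S n) atTop atBot := by
        have := tendsto_neg_atTop_atBot.comp hS
        have h4 := tendsto_atBot_add_const_left atTop (1 : ℝ) this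
        refine h4.congr (fun n => ?_)
        simp [Function.comp]
        ring
      apply tendsto_atBot_mono' atTop ?_ hbot
      filter_upwards [eventually_ge_atTop 2] with n hn
      have := abs_le.mp (hkey n hn)
      linarith [this.2]
    have h5 : Tendsto (fun n => Real.exp (Real.log (ξ n))) atTop (nhds 0) :=
      Real.tendsto_exp_atBot.comp h2
    refine h5.congr' ?_
    filter_upwards [eventually_ge_atTop 1] with n hn
    exact Real.exp_log (hxipos n hn)
end

section
/- Let ξ be a nonincreasing positive sequence tending to 0 with ratio of regularity r = ξ_a/ξ, and let φ be a nondecreasing strictly positive sequence with φ ≤ r pointwise. Then for every m with m·φ_m > 2 and every n ≥ m, (ξ_a)_n ≤ (m/n)^{1 − 2/φ_m} · (ξ_a)_m. -/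
open Finset Filter Real

lemma claim_key (c y : ℝ) (hc : 0 ≤ c) (hy0 : 0 ≤ y) (hy1 : y ≤ 1) (h : 2*c*y ≤ 1) :
    (1-y) ^ (2*c) ≤ 1 - c*y := by
  have h1 : 1 - y ≤ Real.exp (-y) := by have := Real.add_one_le_exp (-y); linarith
  have h2 : (1-y) ^ (2*c) ≤ (Real.exp (-y)) ^ (2*c) :=
    Real.rpow_le_rpow (by linarith) h1 (by linarith)
  have h3 : (Real.exp (-y)) ^ (2*c) = Real.exp (-(2*c*y)) := by
    rw [← Real.exp_mul]; ring_nf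
  have hpos : (0:ℝ) < 1 + 2*c*y := by nlinarith
  have h4 : Real.exp (-(2*c*y)) ≤ 1/(1+2*c*y) := by
    rw [Real.exp_neg, inv_eq_one_div]
    exact one_div_le_one_div_of_le hpos (by have := Real.add_one_le_exp (2*c*y); linarith)
  have h5 : 1/(1+2*c*y) ≤ 1 - c*y := by
    rw [div_le_iff₀ hpos]
    nlinarith [mul_nonneg (mul_nonneg hc hy0) (sub_nonneg.2 h)]
  calc (1-y) ^ (2*c) ≤ Real.exp (-(2*c*y)) := h3 ▸ h2
    _ ≤ 1 - c*y := h4.trans h5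

theorem stmt_4 (ξ φ : ℕ → ℝ)
    (hmono : ∀ n : ℕ, 1 ≤ n → ξ (n + 1) ≤ ξ n)
    (hpos : ∀ n : ℕ, 1 ≤ n → 0 < ξ n)
    (hlim : Tendsto ξ atTop (nhds 0))
    (hφmono : ∀ n : ℕ, 1 ≤ n → φ n ≤ φ (n + 1))
    (hφpos : ∀ n : ℕ, 1 ≤ n → 0 < φ n)
    (hφle : ∀ n : ℕ, 1 ≤ n → φ n ≤ am ξ n / ξ n) :
    ∀ m n : ℕ, 1 ≤ m → 2 < (m : ℝ) * φ m → m ≤ n →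
      am ξ n ≤ ((m : ℝ) / n) ^ ((1 : ℝ) - 2 / φ m) * am ξ m := by
  -- φ monotone on [1,∞)
  have hφmono' : ∀ a b : ℕ, 1 ≤ a → a ≤ b → φ a ≤ φ b := by
    intro a b ha hab
    induction b, hab using Nat.le_induction with
    | base => exact le_refl _
    | succ n hn ih => exact ih.trans (hφmono n (ha.trans hn))
  have ampos : ∀ n : ℕ, 1 ≤ n → 0 < am ξ n := by
    intro n hn
    apply div_pos
    · apply Finset.sum_pos
      · intro i hi; exact hpos i (Finset.mem_Icc.1 hi).1
      · exact ⟨1, Finset.mem_Icc.2 ⟨le_refl _, hn⟩⟩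
    · exact_mod_cast hn
  -- per-step recursion
  have hstep : ∀ n : ℕ, 1 ≤ n →
      am ξ (n+1) * ((n:ℝ)+1 - 1/φ (n+1)) ≤ (n:ℝ) * am ξ n := by
    intro n hn
    have hn1 : (1:ℕ) ≤ n+1 := by omega
    have hφp : 0 < φ (n+1) := hφpos _ hn1
    have hξp : 0 < ξ (n+1) := hpos _ hn1
    have hle : ξ (n+1) * φ (n+1) ≤ am ξ (n+1) := by
      have := hφle (n+1) hn1
      rw [le_div_iff₀ hξp] at this; linarith [this]
    have hξle : ξ (n+1) ≤ am ξ (n+1) / φ (n+1) := by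
      rw [le_div_iff₀ hφp]; linarith
    have hsum : (∑ j ∈ Finset.Icc 1 (n+1), ξ j) = (∑ j ∈ Finset.Icc 1 n, ξ j) + ξ (n+1) := by
      rw [Finset.sum_Icc_succ_top hn1]
    have hnpos : (0:ℝ) < n := by exact_mod_cast hn
    have e1 : ((n:ℝ)+1) * am ξ (n+1) = (n:ℝ) * am ξ n + ξ (n+1) := by
      unfold am
      rw [hsum]
      push_cast
      field_simp
    have : am ξ (n+1) * ((n:ℝ)+1) - am ξ (n+1) * (1/φ (n+1)) ≤ (n:ℝ) * am ξ n := by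
      have h2 : am ξ (n+1) * (1/φ (n+1)) = am ξ (n+1) / φ (n+1) := by ring
      nlinarith [hξle, e1]
    linarith [this, mul_sub (am ξ (n+1)) ((n:ℝ)+1) (1/φ (n+1))]
  intro m n hm hmφ hmn
  set c : ℝ := 1/φ m with hc
  have hφmp : 0 < φ m := hφpos m hm
  have hcpos : 0 < c := by positivity
  have hcm : 2*c < m := by
    rw [hc, mul_one_div, div_lt_iff₀ hφmp]
    linarith
  have hα : (1:ℝ) - 2/φ m = 1 - 2*c := by rw [hc]; ring
  rw [hα]
  induction n, hmn using Nat.le_induction with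
  | base =>
    have : (m:ℝ)/m = 1 := div_self (Nat.cast_ne_zero.2 (by omega))
    rw [this, Real.one_rpow, one_mul]
  | succ n hn ih =>
    have hn1 : 1 ≤ n := le_trans hm hn
    have hnpos : (0:ℝ) < n := by exact_mod_cast hn1
    have hnm : (m:ℝ) ≤ n := by exact_mod_cast hn
    have hcn : 2*c < n := lt_of_lt_of_le hcm hnm
    have hc' : 1/φ (n+1) ≤ c := by
      rw [hc]
      apply one_div_le_one_div_of_le hφmp (hφmono' m (n+1) hm (by omega))
    have hdenpos : (0:ℝ) < (n:ℝ)+1 - c := by linarith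
    have hdenpos' : (0:ℝ) < (n:ℝ)+1 - 1/φ (n+1) := by linarith
    have hAp : 0 < am ξ (n+1) := ampos _ (by omega)
    have hAn : 0 < am ξ n := ampos _ hn1
    -- A_{n+1} ≤ n A_n / (n+1-c)
    have s1 : am ξ (n+1) * ((n:ℝ)+1 - c) ≤ (n:ℝ) * am ξ n := by
      have := hstep n hn1
      nlinarith [hAp, hc']
    have s2 : am ξ (n+1) ≤ (n:ℝ) * am ξ n / ((n:ℝ)+1 - c) := by
      rw [le_div_iff₀ hdenpos]; exact s1
    -- ratio bound
    have hy : (n:ℝ)/((n:ℝ)+1) = 1 - 1/((n:ℝ)+1) := by field_simp; ring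
    have hkey : ((n:ℝ)/((n:ℝ)+1)) ^ (2*c) ≤ ((n:ℝ)+1 - c)/((n:ℝ)+1) := by
      rw [hy]
      have := claim_key c (1/((n:ℝ)+1)) hcpos.le (by positivity)
        (by rw [div_le_one (by linarith)]; linarith)
        (by rw [mul_one_div, div_le_one (by linarith)]; linarith)
      calc (1 - 1/((n:ℝ)+1)) ^ (2*c) ≤ 1 - c * (1/((n:ℝ)+1)) := this
        _ = ((n:ℝ)+1 - c)/((n:ℝ)+1) := by field_simp
    have hratio : (n:ℝ)/((n:ℝ)+1 - c) ≤ ((n:ℝ)/((n:ℝ)+1)) ^ ((1:ℝ) - 2*c) := by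
      have hb : (0:ℝ) < (n:ℝ)/((n:ℝ)+1) := by positivity
      rw [Real.rpow_sub hb, Real.rpow_one]
      rw [div_le_div_iff₀ hdenpos (Real.rpow_pos_of_pos hb _)]
      have h2 : ((n:ℝ)/((n:ℝ)+1)) ^ (2*c) * ((n:ℝ)+1) ≤ (n:ℝ)+1 - c := by
        have := mul_le_mul_of_nonneg_right hkey (le_of_lt (show (0:ℝ) < (n:ℝ)+1 by linarith))
        calc ((n:ℝ)/((n:ℝ)+1)) ^ (2*c) * ((n:ℝ)+1)
            ≤ (((n:ℝ)+1 - c)/((n:ℝ)+1)) * ((n:ℝ)+1) := this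
          _ = (n:ℝ)+1 - c := by field_simp
      calc (n:ℝ) * ((n:ℝ)/((n:ℝ)+1)) ^ (2*c)
          = ((n:ℝ)/((n:ℝ)+1)) * (((n:ℝ)/((n:ℝ)+1)) ^ (2*c) * ((n:ℝ)+1)) := by
            field_simp
        _ ≤ ((n:ℝ)/((n:ℝ)+1)) * ((n:ℝ)+1 - c) := by
            apply mul_le_mul_of_nonneg_left h2 (by positivity)
        _ = (n:ℝ)/((n:ℝ)+1) * ((n:ℝ)+1 - c) := rfl
    -- combine
    have t1 : am ξ (n+1) ≤ ((n:ℝ)/((n:ℝ)+1)) ^ ((1:ℝ) - 2*c) * am ξ n := by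
      calc am ξ (n+1) ≤ (n:ℝ) * am ξ n / ((n:ℝ)+1 - c) := s2
        _ = ((n:ℝ)/((n:ℝ)+1 - c)) * am ξ n := by ring
        _ ≤ ((n:ℝ)/((n:ℝ)+1)) ^ ((1:ℝ) - 2*c) * am ξ n :=
            mul_le_mul_of_nonneg_right hratio hAn.le
    have t2 : am ξ (n+1) ≤ ((n:ℝ)/((n:ℝ)+1)) ^ ((1:ℝ) - 2*c) * (((m:ℝ)/n) ^ ((1:ℝ) - 2*c) * am ξ m) := by
      refine t1.trans ?_
      exact mul_le_mul_of_nonneg_left ih (Real.rpow_nonneg (by positivity) _)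
    have hmul : ((n:ℝ)/((n:ℝ)+1)) ^ ((1:ℝ) - 2*c) * ((m:ℝ)/n) ^ ((1:ℝ) - 2*c)
        = ((m:ℝ)/((n:ℝ)+1)) ^ ((1:ℝ) - 2*c) := by
      rw [← Real.mul_rpow (by positivity) (by positivity)]
      congr 1
      field_simp
    calc am ξ (n+1) ≤ _ := t2
      _ = ((m:ℝ)/((n:ℝ)+1)) ^ ((1:ℝ) - 2*c) * am ξ m := by rw [← mul_assoc, hmul]
      _ = ((m:ℝ)/((n+1:ℕ):ℝ)) ^ ((1:ℝ) - 2*c) * am ξ m := by push_cast; ring_nf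
end

section
/- For any η ∈ c₀* (nonincreasing, tending to 0) with η_n > 0 for all n, the ratio of second-order to first-order arithmetic means satisfies r(η_a)_{n+1} ≤ (1 + 1/n)·r(η_a)_n for all n ≥ 1, where r(η_a)_n = (η_{a²})_n/(η_a)_n. -/
open Finset Filter Real

theorem stmt_5 (η : ℕ → ℝ)
    (hmono : ∀ n : ℕ, 1 ≤ n → η (n + 1) ≤ η n)
    (hpos : ∀ n : ℕ, 1 ≤ n → 0 < η n)
    (hlim : Tendsto η atTop (nhds 0)) :
    ∀ n : ℕ, 1 ≤ n →
      am2 η (n + 1) / am η (n + 1) ≤ (1 + 1 / (n : ℝ)) * (am2 η n / am η n) := by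
  -- antitonicity of η on [1, ∞)
  have hanti : ∀ i j : ℕ, 1 ≤ i → i ≤ j → η j ≤ η i := by
    intro i j hi hij
    induction j with
    | zero => omega
    | succ k ih =>
      rcases Nat.lt_or_ge i (k+1) with h | h
      · have hk : 1 ≤ k := by omega
        exact le_trans (hmono k hk) (ih (by omega))
      · have : i = k + 1 := by omega
        simp [this]
  set S : ℕ → ℝ := fun m => ∑ j ∈ Finset.Icc 1 m, η j with hSdef
  set T : ℕ → ℝ := fun m => ∑ j ∈ Finset.Icc 1 m, am η j with hTdef
  have hSpos : ∀ m : ℕ, 1 ≤ m → 0 < S m := by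
    intro m hm
    apply Finset.sum_pos
    · intro i hi
      exact hpos i (Finset.mem_Icc.mp hi).1
    · exact ⟨1, Finset.mem_Icc.mpr ⟨le_refl 1, hm⟩⟩
  have ham_ge : ∀ m : ℕ, 1 ≤ m → η m ≤ am η m := by
    intro m hm
    have hcard : (Finset.Icc 1 m).card = m := by simp
    have hsum : (m : ℝ) * η m ≤ S m := by
      calc (m : ℝ) * η m = ∑ _j ∈ Finset.Icc 1 m, η m := by
            rw [Finset.sum_const, hcard]; ring
        _ ≤ S m := by
            apply Finset.sum_le_sum
            intro i hi
            obtain ⟨h1, h2⟩ := Finset.mem_Icc.mp hi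
            exact hanti i m h1 h2
    have hmpos : (0 : ℝ) < m := by exact_mod_cast hm
    rw [am, le_div_iff₀ hmpos]
    nlinarith [hsum]
  have hTS : ∀ m : ℕ, 1 ≤ m → S m ≤ T m := by
    intro m hm
    apply Finset.sum_le_sum
    intro i hi
    exact ham_ge i (Finset.mem_Icc.mp hi).1
  intro n hn
  have hnpos : (0 : ℝ) < n := by exact_mod_cast hn
  have hn1pos : (0 : ℝ) < (n : ℝ) + 1 := by linarith
  have hSn := hSpos n hn
  have hSn1 := hSpos (n+1) (by omega)
  have hTn := hTS n hn
  -- express the quantities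
  have ham : ∀ m : ℕ, am η m = S m / m := fun m => rfl
  have ham2 : ∀ m : ℕ, am2 η m = T m / m := fun m => rfl
  have hSrec : S (n+1) = S n + η (n+1) := Finset.sum_Icc_succ_top (by omega) η
  have hTrec : T (n+1) = T n + S (n+1) / (n+1) := by
    have := Finset.sum_Icc_succ_top (a := 1) (b := n) (by omega) (am η)
    simpa [ham (n+1)] using this
  have hSmono : S n ≤ S (n+1) := by
    have := hpos (n+1) (by omega)
    linarith [hSrec]
  have cancel : ∀ a b c : ℝ, c ≠ 0 → a / c / (b / c) = a / b := by
    intro a b c hc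
    rw [div_div_div_comm, div_self hc, div_one]
  rw [ham2, ham2, ham, ham]
  push_cast
  rw [cancel _ _ _ (ne_of_gt hn1pos), cancel _ _ _ (ne_of_gt hnpos)]
  have h1 : (1 : ℝ) + 1 / n = ((n : ℝ) + 1) / n := by field_simp
  rw [h1, div_mul_div_comm, div_le_div_iff₀ hSn1 (by positivity)]
  -- goal : T (n+1) * (n * S n) ≤ (n+1) * T n * S (n+1)
  have hTr : ((n : ℝ) + 1) * T (n + 1) = ((n : ℝ) + 1) * T n + S (n + 1) := by
    rw [hTrec]
    field_simp
  have hTr2 : ((n : ℝ) + 1) * T (n + 1) * ((n : ℝ) * S n)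
      = (((n : ℝ) + 1) * T n + S (n + 1)) * ((n : ℝ) * S n) := by rw [hTr]
  nlinarith [hTr2, mul_nonneg (mul_nonneg (mul_nonneg (sub_nonneg.mpr hSmono) (le_trans hSn.le hTn)) hnpos.le) hn1pos.le,
    mul_nonneg (mul_nonneg (sub_nonneg.mpr hTn) hSn1.le) hn1pos.le,
    mul_pos hSn hSn1]
end

section
/- Let 0 ≠ η ∈ c₀* with η_2 > 0. Then for all n > 1, the ratio r(η_a)_n = (η_{a²})_n/(η_a)_n is strictly less than the harmonic number H_n = ∑_{j=1}^n 1/j; more precisely, H_n − r(η_a)_n = (∑_{i=2}^n η_i H_{i−1})/(∑_{i=1}^n η_i). -/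
open Finset Filter Real

lemma harm_sub (j n : ℕ) (hj : 1 ≤ j) (hjn : j ≤ n) :
    ∑ k ∈ Finset.Icc j n, (1 : ℝ) / k = harm n - harm (j - 1) := by
  have h0 : Finset.Icc 1 n = Finset.Ioc 0 n := by
    rw [← Finset.Icc_add_one_left_eq_Ioc]; rfl
  have h1 : Finset.Icc 1 (j - 1) = Finset.Ioc 0 (j - 1) := by
    rw [← Finset.Icc_add_one_left_eq_Ioc]; rfl
  have h2 : Finset.Icc j n = Finset.Ioc (j - 1) n := by
    rw [← Finset.Icc_add_one_left_eq_Ioc]; congr 1; omega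
  have := Finset.sum_Ioc_consecutive (fun k : ℕ => (1 : ℝ) / k)
    (Nat.zero_le (j - 1)) (by omega : j - 1 ≤ n)
  unfold harm
  rw [h0, h1, h2]
  linarith [this]

theorem stmt_8 (η : ℕ → ℝ)
    (hmono : ∀ n : ℕ, 1 ≤ n → η (n + 1) ≤ η n)
    (hnonneg : ∀ n : ℕ, 1 ≤ n → 0 ≤ η n)
    (hlim : Tendsto η atTop (nhds 0))
    (h1 : 0 < η 1) (h2 : 0 < η 2) :
    ∀ n : ℕ, 1 < n →
      am2 η n / am η n < harm n ∧
      harm n - am2 η n / am η n =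
        (∑ i ∈ Finset.Icc 2 n, η i * harm (i - 1)) / (∑ i ∈ Finset.Icc 1 n, η i) := by
  intro n hn
  have hn1 : 1 ≤ n := hn.le
  have hnR : (0 : ℝ) < n := by positivity
  set S := ∑ i ∈ Finset.Icc 1 n, η i with hSdef
  have hSpos : 0 < S := Finset.sum_pos'
    (fun i hi => hnonneg i (Finset.mem_Icc.mp hi).1)
    ⟨1, Finset.mem_Icc.mpr ⟨le_refl 1, hn1⟩, h1⟩
  set T := ∑ i ∈ Finset.Icc 2 n, η i * harm (i - 1) with hTdef
  have harm_nonneg : ∀ m, 0 ≤ harm m := fun m =>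
    Finset.sum_nonneg fun j _ => by positivity
  -- key double-sum swap
  have hkey : ∑ k ∈ Finset.Icc 1 n, am η k
      = ∑ j ∈ Finset.Icc 1 n, η j * (harm n - harm (j - 1)) := by
    unfold am
    calc ∑ k ∈ Finset.Icc 1 n, (∑ j ∈ Finset.Icc 1 k, η j) / k
        = ∑ k ∈ Finset.Icc 1 n, ∑ j ∈ Finset.Icc 1 k, η j * (1 / k) := by
          refine Finset.sum_congr rfl fun k _ => ?_
          rw [Finset.sum_div]
          exact Finset.sum_congr rfl fun j _ => by ring
      _ = ∑ j ∈ Finset.Icc 1 n, ∑ k ∈ Finset.Icc j n, η j * (1 / k) := by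
          refine Finset.sum_comm' ?_
          intro k j
          simp only [Finset.mem_Icc]
          omega
      _ = ∑ j ∈ Finset.Icc 1 n, η j * (harm n - harm (j - 1)) := by
          refine Finset.sum_congr rfl fun j hj => ?_
          obtain ⟨hj1, hjn⟩ := Finset.mem_Icc.mp hj
          rw [← Finset.mul_sum, harm_sub j n hj1 hjn]
  have hexp : ∑ k ∈ Finset.Icc 1 n, am η k = S * harm n - T := by
    rw [hkey]
    have : ∑ j ∈ Finset.Icc 1 n, η j * (harm n - harm (j - 1))
        = (∑ j ∈ Finset.Icc 1 n, η j * harm n)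
          - ∑ j ∈ Finset.Icc 1 n, η j * harm (j - 1) := by
      rw [← Finset.sum_sub_distrib]
      exact Finset.sum_congr rfl fun j _ => by ring
    rw [this, ← Finset.sum_mul]
    congr 1
    have hins : Finset.Icc 1 n = insert 1 (Finset.Icc 2 n) := by
      ext x; simp [Finset.mem_Icc, Finset.mem_insert]; omega
    rw [hTdef, hins, Finset.sum_insert (by simp [Finset.mem_Icc])]
    have : harm (1 - 1) = 0 := by simp [harm]
    rw [this]; ring
  have ham : am η n = S / n := rfl
  have ham2 : am2 η n = (S * harm n - T) / n := by
    unfold am2 am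
    rw [← hexp]
    rfl
  have hratio : am2 η n / am η n = (S * harm n - T) / S := by
    rw [ham, ham2]
    field_simp
  have hdiff : harm n - am2 η n / am η n = T / S := by
    rw [hratio]
    field_simp
    ring
  have hTpos : 0 < T := by
    have h2mem : 2 ∈ Finset.Icc 2 n := Finset.mem_Icc.mpr ⟨le_refl 2, hn⟩
    have hle : η 2 * harm (2 - 1) ≤ T :=
      Finset.single_le_sum (f := fun i => η i * harm (i - 1))
        (fun i hi => mul_nonneg
          (hnonneg i (le_trans one_le_two (Finset.mem_Icc.mp hi).1))
          (harm_nonneg _)) h2mem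
    have hharm1 : harm 1 = 1 := by simp [harm]
    have : η 2 * harm (2 - 1) = η 2 := by norm_num [hharm1]
    linarith
  constructor
  · have : 0 < T / S := div_pos hTpos hSpos
    linarith [hdiff]
  · rw [hdiff]
end

section
/- Let η ∈ c₀* with η_n > 0 for all n. Then the sequence H_n − (η_{a²})_n/(η_a)_n is strictly increasing in n. -/
open Finset Filter Real

theorem stmt_9 (η : ℕ → ℝ)
    (hmono : ∀ n : ℕ, 1 ≤ n → η (n + 1) ≤ η n)
    (hpos : ∀ n : ℕ, 1 ≤ n → 0 < η n)
    (hlim : Tendsto η atTop (nhds 0)) :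
    ∀ n : ℕ, 1 ≤ n →
      harm n - am2 η n / am η n < harm (n + 1) - am2 η (n + 1) / am η (n + 1) := by
  intro n hn
  have hn1 : (1:ℕ) ≤ n + 1 := Nat.le_add_left 1 n
  have hnR : (0:ℝ) < (n:ℝ) := by exact_mod_cast hn
  have hn1R : (0:ℝ) < ((n:ℝ) + 1) := by linarith
  set S : ℕ → ℝ := fun k => ∑ j ∈ Finset.Icc 1 k, η j with hSdef
  set T : ℕ → ℝ := fun k => ∑ j ∈ Finset.Icc 1 k, am η j with hTdef
  have hSpos : ∀ k, 1 ≤ k → 0 < S k := by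
    intro k hk
    apply Finset.sum_pos
    · intro j hj
      exact hpos j (Finset.mem_Icc.mp hj).1
    · exact ⟨1, Finset.mem_Icc.mpr ⟨le_refl 1, hk⟩⟩
  have hTpos : 0 < T n := by
    apply Finset.sum_pos
    · intro j hj
      have hj1 := (Finset.mem_Icc.mp hj).1
      have : (0:ℝ) < (j:ℝ) := by exact_mod_cast hj1
      exact div_pos (hSpos j hj1) this
    · exact ⟨1, Finset.mem_Icc.mpr ⟨le_refl 1, hn⟩⟩
  have hSsucc : S (n+1) = S n + η (n+1) := Finset.sum_Icc_succ_top hn1 η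
  have hSlt : S n < S (n+1) := by
    have := hpos (n+1) hn1
    rw [hSsucc]; linarith
  have key : T n / S (n+1) < T n / S n :=
    div_lt_div_of_pos_left hTpos (hSpos n hn) hSlt
  have hharm : harm (n+1) = harm n + 1/((n:ℝ)+1) := by
    unfold harm
    rw [Finset.sum_Icc_succ_top hn1]
    push_cast
    ring
  have hSn1 := hSpos (n+1) hn1
  have hSn1' : S (n+1) ≠ 0 := ne_of_gt hSn1
  have hSn0 : S n ≠ 0 := ne_of_gt (hSpos n hn)
  have e1 : am2 η n / am η n = T n / S n := by
    show (T n / n) / (S n / n) = T n / S n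
    field_simp
  have hTsucc : T (n+1) = T n + S (n+1) / ((n:ℝ)+1) := by
    rw [hTdef]
    simp only [Finset.sum_Icc_succ_top hn1 (am η)]
    congr 1
    show S (n+1) / ((n+1:ℕ):ℝ) = _
    push_cast
    ring
  have e2 : am2 η (n+1) / am η (n+1) = T n / S (n+1) + 1/((n:ℝ)+1) := by
    show (T (n+1) / ((n+1:ℕ):ℝ)) / (S (n+1) / ((n+1:ℕ):ℝ)) = _
    rw [hTsucc]
    push_cast
    field_simp
  rw [hharm, e1, e2]
  linarith
end

section
/- Let η ∈ c₀* with η_n > 0 for all n and ∑ η_n = ∞. Then H_n − (η_{a²})_n/(η_a)_n → ∞ as n → ∞. -/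
open Finset Filter Real

lemma abel_key (η : ℕ → ℝ) (n : ℕ) :
    (∑ j ∈ Finset.Icc 1 n, (∑ k ∈ Finset.Icc 1 j, η k) / j)
      + ∑ k ∈ Finset.Icc 1 n, η k * harm (k - 1)
    = harm n * ∑ k ∈ Finset.Icc 1 n, η k := by
  induction n with
  | zero => simp [harm]
  | succ n ih =>
    have h1 : (1:ℕ) ≤ n + 1 := by omega
    have hh : harm (n+1) = harm n + 1/(n+1) := by
      unfold harm
      rw [Finset.sum_Icc_succ_top h1]
      push_cast; ring
    simp only [Finset.sum_Icc_succ_top h1, Nat.add_sub_cancel, hh]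
    have hn1 : ((n:ℝ) + 1) ≠ 0 := by positivity
    push_cast
    field_simp
    nlinarith [ih]

lemma harm_nonneg (n : ℕ) : 0 ≤ harm n := by
  unfold harm
  exact Finset.sum_nonneg fun j _ => by positivity

theorem stmt_10 (η : ℕ → ℝ)
    (hmono : ∀ n : ℕ, 1 ≤ n → η (n + 1) ≤ η n)
    (hpos : ∀ n : ℕ, 1 ≤ n → 0 < η n)
    (hlim : Tendsto η atTop (nhds 0))
    (hnotsum : ¬ Summable η) :
    Tendsto (fun n => harm n - am2 η n / am η n) atTop atTop := by
  set S : ℕ → ℝ := fun n => ∑ k ∈ Finset.Icc 1 n, η k with hSdef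
  -- divergence of partial sums
  have hg : ∀ i, 0 ≤ η (1 + i) := fun i => (hpos _ (by omega)).le
  have hns : ¬ Summable (fun i => η (1 + i)) := by
    intro h
    exact hnotsum ((summable_nat_add_iff 1).mp (h.congr fun i => by rw [add_comm]))
  have hS : Tendsto S atTop atTop := by
    have h := (not_summable_iff_tendsto_nat_atTop_of_nonneg hg).mp hns
    refine h.congr fun n => ?_
    rw [hSdef]
    simp only [← Finset.Ico_add_one_right_eq_Icc, Finset.sum_Ico_eq_sum_range, Nat.add_sub_cancel]
  -- divergence of harmonic numbers
  have hharm : Tendsto harm atTop atTop := by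
    have h := Real.tendsto_sum_range_one_div_nat_succ_atTop
    refine h.congr fun n => ?_
    unfold harm
    rw [← Finset.Ico_add_one_right_eq_Icc, Finset.sum_Ico_eq_sum_range]
    simp only [Nat.add_sub_cancel]
    refine Finset.sum_congr rfl fun i _ => ?_
    push_cast; ring_nf
  rw [tendsto_atTop]
  intro b
  set M : ℝ := 2 * (|b| + 1) with hMdef
  have hMpos : 0 < M := by positivity
  obtain ⟨K, hK⟩ := Filter.eventually_atTop.mp (hharm.eventually_ge_atTop M)
  filter_upwards [hS.eventually_ge_atTop (2 * S K), eventually_ge_atTop (K + 1)]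
    with n hSn hn
  have hn1 : (1:ℕ) ≤ n := by omega
  have hSpos : 0 < S n :=
    Finset.sum_pos (fun k hk => hpos k (Finset.mem_Icc.mp hk).1)
      ⟨1, Finset.mem_Icc.mpr ⟨le_refl 1, hn1⟩⟩
  have hn0 : (n:ℝ) ≠ 0 := Nat.cast_ne_zero.mpr (by omega)
  -- the key identity
  have hdiv : am2 η n / am η n
      = (∑ j ∈ Finset.Icc 1 n, (∑ k ∈ Finset.Icc 1 j, η k) / j) / S n := by
    simp only [am2, am]
    have hB : (∑ j ∈ Finset.Icc 1 n, η j) ≠ 0 := hSpos.ne'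
    have hSn' : S n = ∑ j ∈ Finset.Icc 1 n, η j := rfl
    rw [hSn']
    field_simp
  have hid : harm n - am2 η n / am η n
      = (∑ k ∈ Finset.Icc 1 n, η k * harm (k - 1)) / S n := by
    rw [hdiv, eq_div_iff hSpos.ne', sub_mul, div_mul_cancel₀ _ hSpos.ne']
    linarith [abel_key η n]
  rw [hid, le_div_iff₀ hSpos]
  -- split the sum at K
  have hIcc : ∀ m : ℕ, Finset.Icc 1 m = Finset.Ioc 0 m := fun m => rfl
  have hKn : K ≤ n := by omega
  have hsplit : S K + ∑ k ∈ Finset.Ioc K n, η k = S n := by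
    rw [hSdef]
    simp only [hIcc]
    exact Finset.sum_Ioc_consecutive _ (Nat.zero_le K) hKn
  have hsplitU : (∑ k ∈ Finset.Ioc 0 K, η k * harm (k - 1))
      + ∑ k ∈ Finset.Ioc K n, η k * harm (k - 1)
      = ∑ k ∈ Finset.Icc 1 n, η k * harm (k - 1) := by
    rw [hIcc]
    exact Finset.sum_Ioc_consecutive _ (Nat.zero_le K) hKn
  have h0 : 0 ≤ ∑ k ∈ Finset.Ioc 0 K, η k * harm (k - 1) :=
    Finset.sum_nonneg fun k hk =>
      mul_nonneg (hpos k (Finset.mem_Ioc.mp hk).1).le (harm_nonneg _)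
  have hterm : ∀ k ∈ Finset.Ioc K n, M * η k ≤ η k * harm (k - 1) := by
    intro k hk
    obtain ⟨hk1, _⟩ := Finset.mem_Ioc.mp hk
    have hkpos := hpos k (by omega)
    have := hK (k - 1) (by omega)
    calc M * η k = η k * M := by ring
    _ ≤ η k * harm (k - 1) := by
        exact mul_le_mul_of_nonneg_left this hkpos.le
  have hUge : M * (S n - S K) ≤ ∑ k ∈ Finset.Icc 1 n, η k * harm (k - 1) := by
    have h2 : M * (S n - S K) = ∑ k ∈ Finset.Ioc K n, M * η k := by
      rw [← Finset.mul_sum]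
      congr 1
      linarith [hsplit]
    rw [h2, ← hsplitU]
    have := Finset.sum_le_sum hterm
    linarith
  have hb : b ≤ M / 2 := by
    rw [hMdef]; have := le_abs_self b; linarith
  nlinarith [mul_nonneg hMpos.le (by linarith : (0:ℝ) ≤ S n - 2 * S K),
    mul_nonneg (by linarith : (0:ℝ) ≤ M / 2 - b) hSpos.le]
end

section
/- For η ∈ c₀* with all η_n > 0 and for all n ≥ m: (m/n)((η_a)_m − η_n) + η_n ≤ (η_a)_n ≤ (m/n)((η_a)_m − η_m) + η_m. -/
open Finset Filter Real

theorem stmt_11 (η : ℕ → ℝ)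
    (hmono : ∀ n : ℕ, 1 ≤ n → η (n + 1) ≤ η n)
    (hpos : ∀ n : ℕ, 1 ≤ n → 0 < η n)
    (hlim : Tendsto η atTop (nhds 0)) :
    ∀ m n : ℕ, 1 ≤ m → m ≤ n →
      ((m : ℝ) / n) * (am η m - η n) + η n ≤ am η n ∧
      am η n ≤ ((m : ℝ) / n) * (am η m - η m) + η m := by
  have anti : ∀ m n : ℕ, 1 ≤ m → m ≤ n → η n ≤ η m := by
    intro m n hm hmn
    induction n, hmn using Nat.le_induction with
    | base => exact le_refl _
    | succ k hk ih => exact le_trans (hmono k (le_trans hm hk)) ih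
  intro m n hm hmn
  have hm0 : (0:ℝ) < m := by exact_mod_cast hm
  have hn0 : (0:ℝ) < n := by exact_mod_cast lt_of_lt_of_le hm hmn
  set Sm := ∑ j ∈ Finset.Icc 1 m, η j with hSmdef
  set Sn := ∑ j ∈ Finset.Icc 1 n, η j with hSndef
  set T := ∑ j ∈ Finset.Ioc m n, η j with hTdef
  have hsplit : Sn = Sm + T := by
    rw [hSndef, hSmdef, hTdef, show (1:ℕ) = 0 + 1 from rfl, Finset.Icc_add_one_left_eq_Ioc, Finset.Icc_add_one_left_eq_Ioc]
    exact (Finset.sum_Ioc_consecutive η (Nat.zero_le m) hmn).symm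
  have hcard : (Finset.Ioc m n).card = n - m := Nat.card_Ioc m n
  have hcast : ((n - m : ℕ) : ℝ) = (n:ℝ) - m := by
    exact Nat.cast_sub hmn
  have hT1 : ((n:ℝ) - m) * η n ≤ T := by
    have := Finset.card_nsmul_le_sum (Finset.Ioc m n) η (η n)
      (fun j hj => anti j n (le_trans hm (le_of_lt (Finset.mem_Ioc.mp hj).1)) (Finset.mem_Ioc.mp hj).2)
    rw [hcard, nsmul_eq_mul, hcast] at this
    exact this
  have hT2 : T ≤ ((n:ℝ) - m) * η m := by
    have := Finset.sum_le_card_nsmul (Finset.Ioc m n) η (η m)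
      (fun j hj => anti m j hm (le_of_lt (Finset.mem_Ioc.mp hj).1))
    rw [hcard, nsmul_eq_mul, hcast] at this
    exact this
  have hSm : am η m * m = Sm := by
    rw [am, div_mul_cancel₀ _ (ne_of_gt hm0)]
  have ham : am η n = Sn / n := rfl
  constructor
  · rw [ham, le_div_iff₀ hn0]
    calc ((m:ℝ)/n * (am η m - η n) + η n) * n
        = am η m * m + ((n:ℝ) - m) * η n := by field_simp; ring
      _ = Sm + ((n:ℝ) - m) * η n := by rw [hSm]
      _ ≤ Sm + T := by linarith
      _ = Sn := hsplit.symm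
  · rw [ham, div_le_iff₀ hn0]
    calc Sn = Sm + T := hsplit
      _ ≤ Sm + ((n:ℝ) - m) * η m := by linarith
      _ = am η m * m + ((n:ℝ) - m) * η m := by rw [hSm]
      _ = ((m:ℝ)/n * (am η m - η m) + η m) * n := by field_simp; ring
end

section
/- For η ∈ c₀* with all η_n > 0 and for all n ≥ m: (m/n)((η_{a²})_m + (H_n − H_m)(η_a)_m) ≤ (η_{a²})_n ≤ (m/n)(η_{a²})_m + (H_n − H_m)(η_a)_n. -/
open Finset Filter Real

theorem stmt_12 (η : ℕ → ℝ)
    (hmono : ∀ n : ℕ, 1 ≤ n → η (n + 1) ≤ η n)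
    (hpos : ∀ n : ℕ, 1 ≤ n → 0 < η n)
    (hlim : Tendsto η atTop (nhds 0)) :
    ∀ m n : ℕ, 1 ≤ m → m ≤ n →
      ((m : ℝ) / n) * (am2 η m + (harm n - harm m) * am η m) ≤ am2 η n ∧
      am2 η n ≤ ((m : ℝ) / n) * am2 η m + (harm n - harm m) * am η n := by
  intro m n hm hmn
  have hn : 1 ≤ n := le_trans hm hmn
  have hmpos : (0:ℝ) < m := by exact_mod_cast hm
  have hnpos : (0:ℝ) < n := by exact_mod_cast hn
  set S : ℕ → ℝ := fun k => ∑ j ∈ Finset.Icc 1 k, η j with hS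
  have hIcc : ∀ k : ℕ, Finset.Icc 1 k = Finset.Ioc 0 k := fun k => by rw [← Finset.Icc_add_one_left_eq_Ioc, zero_add]
  have hSmono : ∀ a b : ℕ, a ≤ b → S a ≤ S b := by
    intro a b hab
    apply Finset.sum_le_sum_of_subset_of_nonneg (Finset.Icc_subset_Icc_right hab)
    intro j hj _
    exact (hpos j (Finset.mem_Icc.mp hj).1).le
  have ham : ∀ k, am η k = S k / k := fun k => rfl
  have hharm : harm n - harm m = ∑ j ∈ Finset.Ioc m n, (1:ℝ)/j := by
    unfold harm
    rw [hIcc, hIcc, ← Finset.sum_Ioc_consecutive _ (Nat.zero_le m) hmn]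
    ring
  have hmam : (m:ℝ) * am η m = S m := by
    rw [ham]; field_simp
  have hnam : (n:ℝ) * am η n = S n := by
    rw [ham]; field_simp
  have hsplit : (n:ℝ) * am2 η n = (m:ℝ) * am2 η m + ∑ j ∈ Finset.Ioc m n, am η j := by
    show (n:ℝ) * ((∑ j ∈ Finset.Icc 1 n, am η j) / n)
        = (m:ℝ) * ((∑ j ∈ Finset.Icc 1 m, am η j) / m) + _
    rw [mul_div_cancel₀ _ hnpos.ne', mul_div_cancel₀ _ hmpos.ne',
      hIcc n, hIcc m, ← Finset.sum_Ioc_consecutive _ (Nat.zero_le m) hmn]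
  have hjpos : ∀ j ∈ Finset.Ioc m n, (0:ℝ) < j := by
    intro j hj
    have : 1 ≤ j := le_trans hm (Finset.mem_Ioc.mp hj).1.le
    exact_mod_cast this
  constructor
  · rw [div_mul_eq_mul_div, div_le_iff₀ hnpos, mul_comm (am2 η n) (n:ℝ), hsplit,
      mul_add, ← mul_assoc, mul_comm (m:ℝ) (harm n - harm m), mul_assoc, hmam, hharm]
    apply add_le_add_right
    rw [Finset.sum_mul]
    apply Finset.sum_le_sum
    intro j hj
    rw [one_div, inv_mul_eq_div, ham]
    exact div_le_div_of_nonneg_right (hSmono m j (Finset.mem_Ioc.mp hj).1.le) (hjpos j hj).le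
  · have key : (n:ℝ) * am2 η n ≤ (m:ℝ) * am2 η m + (harm n - harm m) * S n := by
      rw [hsplit, hharm, Finset.sum_mul]
      apply add_le_add_right
      apply Finset.sum_le_sum
      intro j hj
      rw [ham, one_div, inv_mul_eq_div]
      exact div_le_div_of_nonneg_right (hSmono j n (Finset.mem_Ioc.mp hj).2) (hjpos j hj).le
    calc am2 η n = ((n:ℝ) * am2 η n) / n := by field_simp
      _ ≤ ((m:ℝ) * am2 η m + (harm n - harm m) * S n) / n := by
          exact div_le_div_of_nonneg_right key hnpos.le
      _ = ((m : ℝ) / n) * am2 η m + (harm n - harm m) * am η n := by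
          rw [ham n]; ring
end

section
/- Let η ∈ c₀* with all η_n > 0, let m ∈ ℕ, and set n := ⌊m·(η_a)_m/η_m⌋. Then (η_{a²})_n/(η_a)_n > (1/2)·log((η_a)_m/η_m). -/
open Finset Filter Real

private lemma telescope_log (f : ℕ → ℝ) (m : ℕ) :
    ∀ n, m ≤ n → ∑ k ∈ Finset.Icc m n, (f (k + 1) - f k) = f (n + 1) - f m := by
  intro n hn
  induction n, hn using Nat.le_induction with
  | base => simp
  | succ n hmn ih =>
    rw [Finset.sum_Icc_succ_top (by omega), ih]
    ring

theorem stmt_13 (η : ℕ → ℝ)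
    (hmono : ∀ n : ℕ, 1 ≤ n → η (n + 1) ≤ η n)
    (hpos : ∀ n : ℕ, 1 ≤ n → 0 < η n)
    (hlim : Tendsto η atTop (nhds 0)) :
    ∀ m : ℕ, 1 ≤ m →
      am2 η (⌊(m : ℝ) * am η m / η m⌋₊) / am η (⌊(m : ℝ) * am η m / η m⌋₊) >
        (1 / 2) * Real.log (am η m / η m) := by
  intro m hm
  -- monotonicity of η on [1, ∞)
  have hmono' : ∀ i j : ℕ, 1 ≤ i → i ≤ j → η j ≤ η i := by
    intro i j hi hij
    induction j, hij using Nat.le_induction with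
    | base => exact le_refl _
    | succ j hij ih => exact le_trans (hmono j (le_trans hi hij)) ih
  set S : ℕ → ℝ := fun k => ∑ j ∈ Finset.Icc 1 k, η j with hS
  have hSpos : ∀ k : ℕ, 1 ≤ k → 0 < S k := by
    intro k hk
    apply Finset.sum_pos
    · intro j hj
      exact hpos j (Finset.mem_Icc.mp hj).1
    · exact ⟨1, Finset.mem_Icc.mpr ⟨le_refl 1, hk⟩⟩
  have hSmono : ∀ i j : ℕ, i ≤ j → S i ≤ S j := by
    intro i j hij
    apply Finset.sum_le_sum_of_subset_of_nonneg (Finset.Icc_subset_Icc_right hij)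
    intro k hk _
    exact le_of_lt (hpos k (Finset.mem_Icc.mp hk).1)
  have hm0 : (0 : ℝ) < m := by exact_mod_cast hm
  have hηm := hpos m hm
  have hSm := hSpos m hm
  -- am η m = S m / m and η m ≤ am η m
  have ham : ∀ k, am η k = S k / k := fun k => rfl
  have hmam : (m : ℝ) * am η m = S m := by
    rw [ham, mul_div_cancel₀ _ (ne_of_gt hm0)]
  have hetale : η m ≤ am η m := by
    rw [ham, le_div_iff₀ hm0, mul_comm]
    calc (m : ℝ) * η m = ∑ _j ∈ Finset.Icc 1 m, η m := by
          simp [Finset.sum_const, Nat.card_Icc]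
      _ ≤ S m := Finset.sum_le_sum fun j hj =>
          hmono' j m (Finset.mem_Icc.mp hj).1 (Finset.mem_Icc.mp hj).2
  have hr1 : (1 : ℝ) ≤ am η m / η m := (one_le_div hηm).mpr hetale
  set x : ℝ := (m : ℝ) * am η m / η m with hx
  have hxm : (m : ℝ) ≤ x := by
    rw [hx, mul_div_assoc]
    nlinarith
  set n : ℕ := ⌊x⌋₊ with hn
  have hmn : m ≤ n := Nat.le_floor hxm
  have hn1 : 1 ≤ n := le_trans hm hmn
  have hn0 : (0 : ℝ) < n := by exact_mod_cast hn1
  have hSn := hSpos n hn1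
  have hnlex : (n : ℝ) ≤ x := Nat.floor_le (le_trans (le_of_lt hm0) hxm)
  have hxltn1 : x < n + 1 := Nat.lt_floor_add_one x
  -- S n ≤ 2 * S m
  have hSn2 : S n ≤ 2 * S m := by
    have hsplit : S m + ∑ j ∈ Finset.Ioc m n, η j = S n := by
      have h1 : ∀ k, S k = ∑ j ∈ Finset.Ioc 0 k, η j := by
        intro k; rw [hS]; congr 1
      rw [h1 m, h1 n]
      exact Finset.sum_Ioc_consecutive η (Nat.zero_le m) hmn
    have hbound : ∑ j ∈ Finset.Ioc m n, η j ≤ ((n : ℝ) - m) * η m := by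
      calc ∑ j ∈ Finset.Ioc m n, η j ≤ ∑ _j ∈ Finset.Ioc m n, η m :=
            Finset.sum_le_sum fun j hj =>
              hmono' m j hm (le_of_lt (Finset.mem_Ioc.mp hj).1)
        _ = ((n : ℝ) - m) * η m := by
            rw [Finset.sum_const, Nat.card_Ioc, nsmul_eq_mul]
            congr 1
            push_cast [Nat.cast_sub hmn]
            ring
    have hxb : ((n : ℝ) - m) * η m ≤ S m - m * η m := by
      have : (n : ℝ) * η m ≤ x * η m := mul_le_mul_of_nonneg_right hnlex (le_of_lt hηm)
      have hxη : x * η m = S m := by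
        rw [hx, div_mul_cancel₀ _ (ne_of_gt hηm), hmam]
      nlinarith
    nlinarith
  -- sum of am η over Icc m n is big
  set L : ℝ := Real.log (am η m / η m) with hL
  have hL0 : 0 ≤ L := Real.log_nonneg hr1
  have hharm : Real.log ((n : ℝ) + 1) - Real.log m < ∑ k ∈ Finset.Icc m n, (1 : ℝ) / k := by
    have htel : ∑ k ∈ Finset.Icc m n, (Real.log ((k : ℕ) + 1 : ℕ) - Real.log k)
        = Real.log ((n : ℕ) + 1 : ℕ) - Real.log m :=
      telescope_log (fun k => Real.log k) m n hmn
    have hlt : ∀ k ∈ Finset.Icc m n,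
        Real.log ((k : ℕ) + 1 : ℕ) - Real.log k < 1 / k := by
      intro k hk
      have hk1 : 1 ≤ k := le_trans hm (Finset.mem_Icc.mp hk).1
      have hk0 : (0 : ℝ) < k := by exact_mod_cast hk1
      have h1 : Real.log (((k : ℝ) + 1) / k) < ((k : ℝ) + 1) / k - 1 := by
        apply Real.log_lt_sub_one_of_pos (by positivity)
        intro hcon
        rw [div_eq_one_iff_eq (ne_of_gt hk0)] at hcon
        linarith
      rw [Real.log_div (by positivity) (ne_of_gt hk0)] at h1
      have h2 : ((k : ℝ) + 1) / k - 1 = 1 / k := by field_simp; ring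
      rw [h2] at h1
      push_cast
      convert h1 using 2
    calc Real.log ((n : ℝ) + 1) - Real.log m
        = ∑ k ∈ Finset.Icc m n, (Real.log ((k : ℕ) + 1 : ℕ) - Real.log k) := by
          rw [htel]; push_cast; ring
      _ < ∑ k ∈ Finset.Icc m n, (1 : ℝ) / k :=
          Finset.sum_lt_sum_of_nonempty (Finset.nonempty_Icc.mpr hmn) hlt
  have hlogge : L ≤ Real.log ((n : ℝ) + 1) - Real.log m := by
    rw [← Real.log_div (by positivity) (ne_of_gt hm0)]
    apply Real.log_le_log (by positivity)
    rw [div_le_div_iff₀ hηm hm0]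
    have h := (div_lt_iff₀ hηm).mp hxltn1
    nlinarith
  -- main estimate on A := ∑_{k=1}^n am η k
  set A : ℝ := ∑ k ∈ Finset.Icc 1 n, am η k with hA
  have hAbig : S m * L < A := by
    have h1 : ∑ k ∈ Finset.Icc m n, am η k ≤ A := by
      apply Finset.sum_le_sum_of_subset_of_nonneg (Finset.Icc_subset_Icc_left hm)
      intro k hk _
      have hk1 : 1 ≤ k := (Finset.mem_Icc.mp hk).1
      exact le_of_lt (div_pos (hSpos k hk1) (by exact_mod_cast hk1))
    have h2 : S m * ∑ k ∈ Finset.Icc m n, (1 : ℝ) / k ≤ ∑ k ∈ Finset.Icc m n, am η k := by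
      rw [Finset.mul_sum]
      apply Finset.sum_le_sum
      intro k hk
      obtain ⟨hk1, hk2⟩ := Finset.mem_Icc.mp hk
      have hk0 : (0 : ℝ) < k := by exact_mod_cast le_trans hm hk1
      rw [ham, mul_one_div, div_le_div_iff₀ hk0 hk0]
      exact mul_le_mul_of_nonneg_right (hSmono m k hk1) (le_of_lt hk0)
    have h3 : S m * L < S m * ∑ k ∈ Finset.Icc m n, (1 : ℝ) / k := by
      apply mul_lt_mul_of_pos_left _ hSm
      exact lt_of_le_of_lt hlogge hharm
    linarith
  have hkey : (1 / 2) * L * S n < A := by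
    nlinarith
  -- conclude
  have heq : am2 η n / am η n = A / S n := by
    show (∑ k ∈ Finset.Icc 1 n, am η k) / (n : ℝ) / (S n / n) = A / S n
    rw [← hA]
    rw [div_div_div_cancel_right₀]
    exact ne_of_gt hn0
  show am2 η n / am η n > (1 / 2) * L
  rw [heq, gt_iff_lt, lt_div_iff₀ hSn]
  linarith
end

section
/- A sequence η ∈ c₀* with all η_n > 0 is regular (i.e., there exists C with (η_a)_n ≤ C·η_n for all n) if and only if η_a is regular (i.e., there exists C' with (η_{a²})_n ≤ C'·(η_a)_n for all n). -/
open Finset Filter Real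

namespace Stmt14Aux

/-- A step-antitone sequence on [1,∞) is antitone there. -/
lemma anti_of_step (ξ : ℕ → ℝ) (h : ∀ n, 1 ≤ n → ξ (n + 1) ≤ ξ n) :
    ∀ a b : ℕ, 1 ≤ a → a ≤ b → ξ b ≤ ξ a := by
  intro a b ha hab
  induction b with
  | zero => omega
  | succ b ih =>
    rcases Nat.lt_succ_iff_lt_or_eq.mp (Nat.lt_succ_of_le hab) with h1 | h1
    · exact le_trans (h b (by omega)) (ih (by omega))
    · subst h1; exact le_rfl

lemma one_le_mul' {a b : ℕ} (ha : 1 ≤ a) (hb : 1 ≤ b) : 1 ≤ a * b :=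
  Nat.one_le_iff_ne_zero.mpr (Nat.mul_ne_zero (by omega) (by omega))

lemma am_pos (ξ : ℕ → ℝ) (hpos : ∀ n, 1 ≤ n → 0 < ξ n) (n : ℕ) (hn : 1 ≤ n) :
    0 < am ξ n := by
  apply div_pos
  · exact Finset.sum_pos (fun j hj => hpos j (Finset.mem_Icc.mp hj).1) ⟨1, by simp [hn]⟩
  · exact_mod_cast hn

/-- n * am ξ n = partial sum. -/
lemma am_mul (ξ : ℕ → ℝ) (n : ℕ) (hn : 1 ≤ n) :
    (n : ℝ) * am ξ n = ∑ j ∈ Finset.Icc 1 n, ξ j := by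
  have : (n : ℝ) ≠ 0 := by positivity
  unfold am
  field_simp

/-- am is step-antitone for step-antitone positive ξ. -/
lemma am_step (ξ : ℕ → ℝ) (h : ∀ n, 1 ≤ n → ξ (n + 1) ≤ ξ n)
    (hpos : ∀ n, 1 ≤ n → 0 < ξ n) :
    ∀ n, 1 ≤ n → am ξ (n + 1) ≤ am ξ n := by
  intro n hn
  have hanti := anti_of_step ξ h
  have hS : (n : ℝ) * ξ (n + 1) ≤ ∑ j ∈ Finset.Icc 1 n, ξ j := by
    have := Finset.card_nsmul_le_sum (Finset.Icc 1 n) ξ (ξ (n + 1))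
      (fun j hj => hanti j (n + 1) (Finset.mem_Icc.mp hj).1
        (le_trans (Finset.mem_Icc.mp hj).2 (Nat.le_succ n)))
    simpa [Nat.card_Icc, nsmul_eq_mul] using this
  rw [am, am, div_le_div_iff₀ (by positivity) (by positivity)]
  rw [Finset.sum_Icc_succ_top (by omega : 1 ≤ n + 1)]
  push_cast
  nlinarith [hS]

/-- am ξ n ≥ ξ n for antitone ξ. -/
lemma self_le_am (ξ : ℕ → ℝ) (h : ∀ n, 1 ≤ n → ξ (n + 1) ≤ ξ n) (n : ℕ) (hn : 1 ≤ n) :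
    ξ n ≤ am ξ n := by
  have hanti := anti_of_step ξ h
  have hS : (n : ℝ) * ξ n ≤ ∑ j ∈ Finset.Icc 1 n, ξ j := by
    have := Finset.card_nsmul_le_sum (Finset.Icc 1 n) ξ (ξ n)
      (fun j hj => hanti j n (Finset.mem_Icc.mp hj).1 (Finset.mem_Icc.mp hj).2)
    simpa [Nat.card_Icc, nsmul_eq_mul] using this
  rw [am, le_div_iff₀ (by positivity : (0:ℝ) < (n:ℝ))]
  linarith [hS]

end Stmt14Aux

open Stmt14Aux in
theorem stmt_14 (η : ℕ → ℝ)
    (hmono : ∀ n : ℕ, 1 ≤ n → η (n + 1) ≤ η n)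
    (hpos : ∀ n : ℕ, 1 ≤ n → 0 < η n)
    (hlim : Tendsto η atTop (nhds 0)) :
    (∃ C : ℝ, ∀ n : ℕ, 1 ≤ n → am η n ≤ C * η n) ↔
    (∃ C' : ℝ, ∀ n : ℕ, 1 ≤ n → am2 η n ≤ C' * am η n) := by
  constructor
  · rintro ⟨C, hC⟩
    refine ⟨C, fun n hn => ?_⟩
    have hnpos : (0:ℝ) < n := by exact_mod_cast hn
    have hsum : ∑ j ∈ Finset.Icc 1 n, am η j ≤ ∑ j ∈ Finset.Icc 1 n, C * η j :=
      Finset.sum_le_sum fun j hj => hC j (Finset.mem_Icc.mp hj).1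
    have : am2 η n = (∑ j ∈ Finset.Icc 1 n, am η j) / n := rfl
    rw [this]
    rw [div_le_iff₀ hnpos]
    calc ∑ j ∈ Finset.Icc 1 n, am η j ≤ ∑ j ∈ Finset.Icc 1 n, C * η j := hsum
      _ = C * (∑ j ∈ Finset.Icc 1 n, η j) := by rw [Finset.mul_sum]
      _ = C * ((n : ℝ) * am η n) := by rw [am_mul η n hn]
      _ = C * am η n * n := by ring
  · rintro ⟨C', hC'⟩
    set σ : ℕ → ℝ := am η with hσ
    have hσpos : ∀ n, 1 ≤ n → 0 < σ n := fun n hn => am_pos η hpos n hn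
    have hσstep : ∀ n, 1 ≤ n → σ (n + 1) ≤ σ n := am_step η hmono hpos
    have hσanti := anti_of_step σ hσstep
    have hηanti := anti_of_step η hmono
    set S : ℕ → ℝ := fun n => ∑ j ∈ Finset.Icc 1 n, σ j with hSdef
    -- C' ≥ 1
    have hC1 : 1 ≤ C' := by
      have h1 := hC' 1 le_rfl
      have e1 : am2 η 1 = σ 1 := by simp [am2, am, hσ]
      have e2 : am η 1 = σ 1 := rfl
      rw [e1] at h1
      nlinarith [hσpos 1 le_rfl]
    have hC0 : (0:ℝ) < C' := by linarith
    -- S n ≤ C' * n * σ n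
    have key1 : ∀ n, 1 ≤ n → S n ≤ C' * n * σ n := by
      intro n hn
      have hnpos : (0:ℝ) < n := by exact_mod_cast hn
      have := hC' n hn
      have e : am2 η n = S n / n := rfl
      rw [e, div_le_iff₀ hnpos] at this
      calc S n ≤ C' * σ n * n := this
        _ = C' * n * σ n := by ring
    -- S nondecreasing
    have hSmono : ∀ a b, 1 ≤ a → a ≤ b → S a ≤ S b := by
      intro a b ha hab
      apply Finset.sum_le_sum_of_subset_of_nonneg
      · exact Finset.Icc_subset_Icc_right hab
      · intro j hj _
        exact le_of_lt (hσpos j (Finset.mem_Icc.mp hj).1)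
    -- S positive
    have hSpos : ∀ n, 1 ≤ n → 0 < S n := by
      intro n hn
      exact Finset.sum_pos (fun j hj => hσpos j (Finset.mem_Icc.mp hj).1) ⟨1, by simp [hn]⟩
    -- doubling of S
    set ε : ℝ := 1 / (2 * C') with hε
    have hεpos : 0 < ε := by positivity
    have keyS : ∀ n, 1 ≤ n → (1 + ε) * S n ≤ S (2 * n) := by
      intro n hn
      have hnpos : (0:ℝ) < n := by exact_mod_cast hn
      have hsplit : S n + (∑ j ∈ Finset.Ioc n (2 * n), σ j) = S (2 * n) := by
        have e1 : ∀ m, Finset.Icc 1 m = Finset.Ioc 0 m := fun m => by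
          rw [← Finset.Icc_add_one_left_eq_Ioc, zero_add]
        simp only [hSdef, e1]
        exact Finset.sum_Ioc_consecutive σ (Nat.zero_le n) (by omega)
      have hterm : ∀ j ∈ Finset.Ioc n (2 * n), S n / (C' * (2 * n)) ≤ σ j := by
        intro j hj
        obtain ⟨hj1, hj2⟩ := Finset.mem_Ioc.mp hj
        have hj1' : 1 ≤ j := by omega
        have hjpos : (0:ℝ) < j := by exact_mod_cast hj1'
        have h1 : S j ≤ C' * j * σ j := key1 j hj1'
        have h2 : S n ≤ S j := hSmono n j hn (le_of_lt hj1)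
        rw [div_le_iff₀ (by positivity)]
        have hjle : (j:ℝ) ≤ 2 * n := by exact_mod_cast hj2
        have hσj := hσpos j hj1'
        nlinarith [mul_nonneg (le_of_lt hC0) (mul_nonneg (le_of_lt hσj) (by linarith : (0:ℝ) ≤ 2 * (n:ℝ) - (j:ℝ)))]
      have hsum2 : (n : ℝ) * (S n / (C' * (2 * n))) ≤ ∑ j ∈ Finset.Ioc n (2 * n), σ j := by
        have := Finset.card_nsmul_le_sum (Finset.Ioc n (2 * n)) σ (S n / (C' * (2 * n))) hterm
        have hcard : (Finset.Ioc n (2 * n)).card = n := by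
          rw [Nat.card_Ioc]; omega
        rw [hcard, nsmul_eq_mul] at this
        exact_mod_cast this
      have hval : (n : ℝ) * (S n / (C' * (2 * n))) = ε * S n := by
        rw [hε]; field_simp
      linarith [hsplit, hsum2, hval ▸ hsum2]
    -- iterate
    have keyIt : ∀ k : ℕ, ∀ n, 1 ≤ n → (1 + ε) ^ k * S n ≤ S (2 ^ k * n) := by
      intro k
      induction k with
      | zero => intro n hn; simp
      | succ k ih =>
        intro n hn
        have h1 := ih n hn
        have h2 := keyS (2 ^ k * n) (one_le_mul' Nat.one_le_two_pow hn)
        have e : 2 * (2 ^ k * n) = 2 ^ (k + 1) * n := by ring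
        rw [e] at h2
        calc (1 + ε) ^ (k + 1) * S n = (1 + ε) * ((1 + ε) ^ k * S n) := by ring
          _ ≤ (1 + ε) * S (2 ^ k * n) :=
            mul_le_mul_of_nonneg_left h1 (by positivity)
          _ ≤ S (2 ^ (k + 1) * n) := h2
    -- choose k
    obtain ⟨k, hk⟩ := pow_unbounded_of_one_lt (2 * C') (by linarith : (1:ℝ) < 1 + ε)
    set K : ℕ := 2 ^ k with hK
    have hK1 : 1 ≤ K := Nat.one_le_two_pow
    have hKR : (0:ℝ) < (K:ℝ) := by positivity
    -- σ (K n) ≥ 2 σ n / K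
    have keyσ : ∀ n, 1 ≤ n → 2 * σ n ≤ (K:ℝ) * σ (K * n) := by
      intro n hn
      have hnpos : (0:ℝ) < n := by exact_mod_cast hn
      have hKn : 1 ≤ K * n := one_le_mul' hK1 hn
      have h1 : S (K * n) ≤ C' * (K * n) * σ (K * n) := by
        have := key1 (K * n) hKn
        push_cast at this ⊢
        convert this using 3 <;> push_cast <;> ring
      have h2 : (1 + ε) ^ k * S n ≤ S (K * n) := keyIt k n hn
      have h3 : (n : ℝ) * σ n ≤ S n := by
        have := Finset.card_nsmul_le_sum (Finset.Icc 1 n) σ (σ n)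
          (fun j hj => hσanti j n (Finset.mem_Icc.mp hj).1 (Finset.mem_Icc.mp hj).2)
        simpa [Nat.card_Icc, nsmul_eq_mul] using this
      have h4 : 2 * C' * ((n:ℝ) * σ n) ≤ (1 + ε) ^ k * S n := by
        have hSn := hSpos n hn
        have hεk : 2 * C' ≤ (1 + ε) ^ k := le_of_lt hk
        nlinarith [hσpos n hn]
      have : 2 * C' * ((n:ℝ) * σ n) ≤ C' * (K * n) * σ (K * n) := by
        push_cast at h1 ⊢
        nlinarith [h2]
      have hσKn := hσpos (K * n) hKn
      push_cast at this
      have h5 : C' * (n:ℝ) * (2 * σ n) ≤ C' * (n:ℝ) * ((K:ℝ) * σ (K * n)) := by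
        have e1 : C' * (n:ℝ) * (2 * σ n) = 2 * C' * ((n:ℝ) * σ n) := by ring
        have e2 : C' * (n:ℝ) * ((K:ℝ) * σ (K * n)) = C' * ((K:ℝ) * (n:ℝ)) * σ (K * n) := by ring
        rw [e1, e2]; exact this
      exact le_of_mul_le_mul_left h5 (by positivity)
    -- final bound
    refine ⟨(K : ℝ) - 1, fun n hn => ?_⟩
    have hnpos : (0:ℝ) < n := by exact_mod_cast hn
    have hKn : 1 ≤ K * n := one_le_mul' hK1 hn
    have hTn : (n : ℝ) * σ n = ∑ j ∈ Finset.Icc 1 n, η j := am_mul η n hn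
    have hTKn : ((K * n : ℕ) : ℝ) * σ (K * n) = ∑ j ∈ Finset.Icc 1 (K * n), η j :=
      am_mul η (K * n) hKn
    have hsplit : (∑ j ∈ Finset.Icc 1 n, η j) + (∑ j ∈ Finset.Ioc n (K * n), η j)
        = ∑ j ∈ Finset.Icc 1 (K * n), η j := by
      have e1 : ∀ m, Finset.Icc 1 m = Finset.Ioc 0 m := fun m => by
        rw [← Finset.Icc_add_one_left_eq_Ioc, zero_add]
      simp only [e1]
      exact Finset.sum_Ioc_consecutive η (Nat.zero_le n) (Nat.le_mul_of_pos_left n (by omega))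
    have hupper : (∑ j ∈ Finset.Ioc n (K * n), η j) ≤ ((K:ℝ) - 1) * n * η n := by
      have hterm : ∀ j ∈ Finset.Ioc n (K * n), η j ≤ η n := by
        intro j hj
        exact hηanti n j hn (le_of_lt (Finset.mem_Ioc.mp hj).1)
      have := Finset.sum_le_card_nsmul (Finset.Ioc n (K * n)) η (η n) hterm
      have hcard : (Finset.Ioc n (K * n)).card = K * n - n := Nat.card_Ioc n (K * n)
      rw [hcard, nsmul_eq_mul] at this
      have hle : n ≤ K * n := Nat.le_mul_of_pos_left n (by omega)
      have hcast : ((K * n - n : ℕ) : ℝ) = ((K:ℝ) - 1) * n := by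
        push_cast [Nat.cast_sub hle]
        ring
      rw [hcast] at this
      exact this
    have hlower : (n:ℝ) * σ n ≤ ∑ j ∈ Finset.Ioc n (K * n), η j := by
      have h2 := keyσ n hn
      have : (∑ j ∈ Finset.Ioc n (K * n), η j) = ((K * n : ℕ):ℝ) * σ (K * n) - (n:ℝ) * σ n := by
        rw [hTKn, hTn] at *
        linarith [hsplit]
      rw [this]
      push_cast
      nlinarith [hσpos n hn]
    have : (n:ℝ) * σ n ≤ ((K:ℝ) - 1) * n * η n := le_trans hlower hupper
    have hηn := hpos n hn
    have h6 : (n:ℝ) * σ n ≤ (n:ℝ) * (((K:ℝ) - 1) * η n) := by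
      have e : (n:ℝ) * (((K:ℝ) - 1) * η n) = ((K:ℝ) - 1) * (n:ℝ) * η n := by ring
      rw [e]; exact this
    exact le_of_mul_le_mul_left h6 hnpos
end

section
/- Let 0 ≠ η ∈ c₀*. Then there exist α, β > 0 with α·log n ≤ (η_{a²})_n/(η_a)_n ≤ β·log n for all n ≥ 2 if and only if sup_m (m²(η_a)_{m²})/(m(η_a)_m) < ∞ (the exponential Δ₂-condition), i.e., there exists c > 0 with ∑_{i=1}^{m²} η_i ≤ c·∑_{i=1}^m η_i for all m. -/
open Finset Filter Real

set_option linter.unusedSectionVars false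
set_option linter.unusedVariables false

namespace Stmt15Aux

noncomputable def S (η : ℕ → ℝ) (n : ℕ) : ℝ := ∑ j ∈ Finset.Icc 1 n, η j
noncomputable def T (η : ℕ → ℝ) (n : ℕ) : ℝ := ∑ j ∈ Finset.Icc 1 n, am η j
lemma am_eq (η : ℕ → ℝ) (n : ℕ) : am η n = S η n / n := rfl
lemma am2_eq (η : ℕ → ℝ) (n : ℕ) : am2 η n = T η n / n := rfl

lemma sum_split (f : ℕ → ℝ) (m n : ℕ) (h : m ≤ n) :
    ∑ j ∈ Icc 1 n, f j = ∑ j ∈ Icc 1 m, f j + ∑ j ∈ Icc (m+1) n, f j := by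
  rw [show Icc 1 n = Ioc 0 n from Finset.Icc_add_one_left_eq_Ioc 0 n,
      show Icc 1 m = Ioc 0 m from Finset.Icc_add_one_left_eq_Ioc 0 m,
      show Icc (m+1) n = Ioc m n from Finset.Icc_add_one_left_eq_Ioc m n]
  exact (Finset.sum_Ioc_consecutive _ (Nat.zero_le m) h).symm

lemma tele (f : ℕ → ℝ) (m N : ℕ) (h : m ≤ N) :
    ∑ j ∈ Icc (m+1) N, (f j - f (j-1)) = f N - f m := by
  induction N, h using Nat.le_induction with
  | base => simp
  | succ N hN ih =>
      rw [Finset.sum_Icc_succ_top (by omega), ih]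
      simp only [Nat.add_sub_cancel]
      ring

lemma inv_le_log_sub (j : ℕ) (hj : 2 ≤ j) :
    (1:ℝ)/j ≤ Real.log j - Real.log (j-1 : ℕ) := by
  have hj1 : (1:ℝ) ≤ (j:ℝ) - 1 := by
    have : (2:ℝ) ≤ (j:ℝ) := by exact_mod_cast hj
    linarith
  have hcast : ((j-1:ℕ):ℝ) = (j:ℝ) - 1 := by
    have : 1 ≤ j := by omega
    push_cast [this]; ring
  have hjpos : (0:ℝ) < j := by positivity
  have hpos : (0:ℝ) < (j:ℝ) - 1 := by linarith
  have h0 := Real.log_le_sub_one_of_pos (x := ((j:ℝ)-1)/j) (by positivity)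
  rw [Real.log_div (by linarith) (by linarith)] at h0
  have : ((j:ℝ)-1)/j - 1 = -(1/j) := by field_simp; ring
  rw [hcast]
  rw [this] at h0
  linarith

lemma log_sub_le_inv (j : ℕ) (hj : 1 ≤ j) :
    Real.log ((j:ℝ)+1) - Real.log j ≤ (1:ℝ)/j := by
  have hjpos : (0:ℝ) < j := by exact_mod_cast hj
  have h0 := Real.log_le_sub_one_of_pos (x := ((j:ℝ)+1)/j) (by positivity)
  rw [Real.log_div (by linarith) (by linarith)] at h0
  have : ((j:ℝ)+1)/j - 1 = 1/j := by field_simp; ring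
  linarith [h0, this ▸ h0]

lemma sum_inv_le (m N : ℕ) (hm : 1 ≤ m) (h : m ≤ N) :
    ∑ j ∈ Icc (m+1) N, (1:ℝ)/j ≤ Real.log N - Real.log m := by
  have := tele (fun j => Real.log j) m N h
  calc ∑ j ∈ Icc (m+1) N, (1:ℝ)/j
      ≤ ∑ j ∈ Icc (m+1) N, (Real.log j - Real.log (j-1:ℕ)) := by
        apply Finset.sum_le_sum
        intro j hj
        have := (Finset.mem_Icc.mp hj).1
        exact inv_le_log_sub j (by omega)
    _ = Real.log N - Real.log m := this

lemma le_sum_inv (m n : ℕ) (hm : 1 ≤ m) (h : m ≤ n) :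
    Real.log ((n:ℝ)+1) - Real.log m ≤ ∑ j ∈ Icc m n, (1:ℝ)/j := by
  obtain ⟨a, rfl⟩ : ∃ a, m = a + 1 := ⟨m-1, by omega⟩
  have htele := tele (fun j => Real.log ((j:ℝ)+1)) a n (by omega)
  calc Real.log ((n:ℝ)+1) - Real.log (a+1:ℕ)
      = ∑ j ∈ Icc (a+1) n, (Real.log ((j:ℝ)+1) - Real.log (((j-1:ℕ):ℝ)+1)) := by
        rw [htele]; push_cast; ring_nf
    _ ≤ ∑ j ∈ Icc (a+1) n, (1:ℝ)/j := by
        apply Finset.sum_le_sum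
        intro j hj
        have hj1 : 1 ≤ j := by have := (Finset.mem_Icc.mp hj).1; omega
        have hcast : (((j-1:ℕ)):ℝ)+1 = (j:ℝ) := by
          push_cast [hj1]; ring
        rw [hcast]
        exact log_sub_le_inv j hj1

section main
variable {η : ℕ → ℝ} (hmono : ∀ n : ℕ, 1 ≤ n → η (n + 1) ≤ η n)
  (hnonneg : ∀ n : ℕ, 1 ≤ n → 0 ≤ η n) (h1 : 0 < η 1)

include hmono in
lemma eta_anti : ∀ a b : ℕ, 1 ≤ a → a ≤ b → η b ≤ η a := by
  intro a b ha hab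
  induction b, hab using Nat.le_induction with
  | base => exact le_refl _
  | succ b hb ih => exact le_trans (hmono b (by omega)) ih

include hnonneg h1 in
lemma S_pos (n : ℕ) (hn : 1 ≤ n) : 0 < S η n := by
  have h := Finset.single_le_sum (f := η) (s := Icc 1 n)
    (fun i hi => hnonneg i (Finset.mem_Icc.mp hi).1) (Finset.mem_Icc.mpr ⟨le_refl 1, hn⟩)
  calc (0:ℝ) < η 1 := h1
    _ ≤ S η n := h

include hnonneg in
lemma S_nonneg (n : ℕ) : 0 ≤ S η n :=
  Finset.sum_nonneg fun i hi => hnonneg i (Finset.mem_Icc.mp hi).1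

include hnonneg in
lemma S_mono (m n : ℕ) (h : m ≤ n) : S η m ≤ S η n :=
  Finset.sum_le_sum_of_subset_of_nonneg (Finset.Icc_subset_Icc_right h)
    (fun i hi _ => hnonneg i (Finset.mem_Icc.mp hi).1)

include hnonneg in
lemma am_nonneg (n : ℕ) : 0 ≤ am η n := by
  rw [am_eq]
  exact div_nonneg (S_nonneg hnonneg n) (Nat.cast_nonneg n)

include hmono hnonneg in
lemma am_anti_adj (n : ℕ) (hn : 1 ≤ n) : am η (n+1) ≤ am η n := by
  have key : (n:ℝ) * η (n+1) ≤ S η n := by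
    have : ∑ j ∈ Icc 1 n, η (n+1) ≤ S η n :=
      Finset.sum_le_sum fun j hj =>
        eta_anti hmono j (n+1) (Finset.mem_Icc.mp hj).1 (by have := (Finset.mem_Icc.mp hj).2; omega)
    simpa [Finset.sum_const, Nat.card_Icc, mul_comm] using this
  have hstep : S η (n+1) = S η n + η (n+1) := by
    rw [S, Finset.sum_Icc_succ_top (by omega)]; rfl
  rw [am_eq, am_eq, div_le_div_iff₀ (by positivity) (by positivity)]
  push_cast
  nlinarith [key, hstep]

include hmono hnonneg in
lemma am_anti (m n : ℕ) (hm : 1 ≤ m) (h : m ≤ n) : am η n ≤ am η m := by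
  induction n, h using Nat.le_induction with
  | base => exact le_refl _
  | succ n hn ih => exact le_trans (am_anti_adj hmono hnonneg n (by omega)) ih

end main

lemma S_pos' (η : ℕ → ℝ) (hnonneg : ∀ n : ℕ, 1 ≤ n → 0 ≤ η n) (h1 : 0 < η 1) (n : ℕ) (hn : 1 ≤ n) : 0 < S η n :=
  S_pos hnonneg h1 n hn
lemma S_nonneg' (η : ℕ → ℝ) (hnonneg : ∀ n : ℕ, 1 ≤ n → 0 ≤ η n) (n : ℕ) : 0 ≤ S η n :=
  S_nonneg hnonneg n
lemma S_mono' (η : ℕ → ℝ) (hnonneg : ∀ n : ℕ, 1 ≤ n → 0 ≤ η n) (m n : ℕ) (h : m ≤ n) : S η m ≤ S η n :=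
  S_mono hnonneg m n h
lemma am_nonneg' (η : ℕ → ℝ) (hnonneg : ∀ n : ℕ, 1 ≤ n → 0 ≤ η n) (n : ℕ) : 0 ≤ am η n :=
  am_nonneg hnonneg n
lemma am_anti' (η : ℕ → ℝ) (hmono : ∀ n : ℕ, 1 ≤ n → η (n + 1) ≤ η n)
    (hnonneg : ∀ n : ℕ, 1 ≤ n → 0 ≤ η n) (m n : ℕ) (hm : 1 ≤ m) (h : m ≤ n) : am η n ≤ am η m :=
  am_anti hmono hnonneg m n hm h

section main
variable {η : ℕ → ℝ} (hmono : ∀ n : ℕ, 1 ≤ n → η (n + 1) ≤ η n)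
  (hnonneg : ∀ n : ℕ, 1 ≤ n → 0 ≤ η n) (h1 : 0 < η 1)






include hmono hnonneg in
lemma T_ge_S (n : ℕ) (hn : 1 ≤ n) : S η n ≤ T η n := by
  have h : ∑ j ∈ Icc 1 n, am η n ≤ T η n :=
    Finset.sum_le_sum fun j hj =>
      am_anti' η hmono hnonneg j n (Finset.mem_Icc.mp hj).1 (Finset.mem_Icc.mp hj).2
  have hc : ∑ j ∈ Icc 1 n, am η n = (n:ℝ) * (S η n / n) := by
    rw [Finset.sum_const, Nat.card_Icc, am_eq]
    simp
  rw [hc] at h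
  have hn0 : (n:ℝ) ≠ 0 := by positivity
  rwa [mul_div_cancel₀ _ hn0] at h

include hnonneg in
lemma T_le (n : ℕ) (hn : 1 ≤ n) : T η n ≤ S η n * (1 + Real.log n) := by
  have step1 : T η n ≤ ∑ j ∈ Icc 1 n, S η n / (j:ℝ) := by
    apply Finset.sum_le_sum
    intro j hj
    obtain ⟨hj1, hjn⟩ := Finset.mem_Icc.mp hj
    rw [am_eq]
    gcongr
    exact S_mono' η hnonneg j n hjn
  have step2 : ∑ j ∈ Icc 1 n, (1:ℝ)/(j:ℝ) ≤ 1 + Real.log n := by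
    rw [sum_split (fun j => (1:ℝ)/j) 1 n hn, Finset.Icc_self, Finset.sum_singleton]
    have h2 := sum_inv_le 1 n le_rfl hn
    simp only [Nat.cast_one, Real.log_one] at h2 ⊢
    norm_num at h2 ⊢
    linarith
  calc T η n ≤ ∑ j ∈ Icc 1 n, S η n / (j:ℝ) := step1
    _ = S η n * ∑ j ∈ Icc 1 n, (1:ℝ)/(j:ℝ) := by
        rw [Finset.mul_sum]; apply Finset.sum_congr rfl; intro j _; rw [mul_one_div]
    _ ≤ S η n * (1 + Real.log n) :=
        mul_le_mul_of_nonneg_left step2 (S_nonneg' η hnonneg n)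

include hnonneg in
lemma T_incr_le (m n : ℕ) (hm : 1 ≤ m) (h : m ≤ n) :
    T η n ≤ T η m + S η n * (Real.log n - Real.log m) := by
  have hTn : T η n = T η m + ∑ j ∈ Icc (m+1) n, am η j := sum_split (am η) m n h
  rw [hTn]
  have key : ∑ j ∈ Icc (m+1) n, am η j ≤ S η n * (Real.log n - Real.log m) := by
    have step1 : ∑ j ∈ Icc (m+1) n, am η j ≤ ∑ j ∈ Icc (m+1) n, S η n / (j:ℝ) := by
      apply Finset.sum_le_sum
      intro j hj
      obtain ⟨hj1, hjn⟩ := Finset.mem_Icc.mp hj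
      rw [am_eq]
      gcongr
      exact S_mono' η hnonneg j n hjn
    calc ∑ j ∈ Icc (m+1) n, am η j ≤ ∑ j ∈ Icc (m+1) n, S η n / (j:ℝ) := step1
      _ = S η n * ∑ j ∈ Icc (m+1) n, (1:ℝ)/(j:ℝ) := by
          rw [Finset.mul_sum]; apply Finset.sum_congr rfl; intro j _; rw [mul_one_div]
      _ ≤ S η n * (Real.log n - Real.log m) :=
          mul_le_mul_of_nonneg_left (sum_inv_le m n hm h) (S_nonneg' η hnonneg n)
  linarith [key]

include hnonneg in
lemma T_incr_ge (m n : ℕ) (hm : 1 ≤ m) (h : m ≤ n) :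
    S η m * (Real.log ((n:ℝ)+1) - Real.log m) ≤ T η n := by
  have hsub : ∑ j ∈ Icc m n, am η j ≤ T η n :=
    Finset.sum_le_sum_of_subset_of_nonneg
      (Finset.Icc_subset_Icc_left hm)
      (fun i _ _ => am_nonneg' η hnonneg i)
  have step1 : ∑ j ∈ Icc m n, S η m / (j:ℝ) ≤ ∑ j ∈ Icc m n, am η j := by
    apply Finset.sum_le_sum
    intro j hj
    obtain ⟨hj1, hjn⟩ := Finset.mem_Icc.mp hj
    rw [am_eq]
    gcongr
    exact S_mono' η hnonneg m j hj1
  calc S η m * (Real.log ((n:ℝ)+1) - Real.log m)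
      ≤ S η m * ∑ j ∈ Icc m n, (1:ℝ)/(j:ℝ) :=
        mul_le_mul_of_nonneg_left (le_sum_inv m n hm h) (S_nonneg' η hnonneg m)
    _ = ∑ j ∈ Icc m n, S η m / (j:ℝ) := by
        rw [Finset.mul_sum]; apply Finset.sum_congr rfl; intro j _; rw [mul_one_div]
    _ ≤ T η n := le_trans step1 hsub

lemma ratio_eq (n : ℕ) (hn : 1 ≤ n) : am2 η n / am η n = T η n / S η n := by
  rw [am2_eq, am_eq, div_div_div_comm]
  have hn0 : (n:ℝ) ≠ 0 := by positivity
  rw [div_self hn0, div_one]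

end main

lemma T_ge_S' (η : ℕ → ℝ) (hmono : ∀ n : ℕ, 1 ≤ n → η (n + 1) ≤ η n)
    (hnonneg : ∀ n : ℕ, 1 ≤ n → 0 ≤ η n) (n : ℕ) (hn : 1 ≤ n) : S η n ≤ T η n :=
  T_ge_S hmono hnonneg n hn
lemma T_le' (η : ℕ → ℝ) (hnonneg : ∀ n : ℕ, 1 ≤ n → 0 ≤ η n) (n : ℕ) (hn : 1 ≤ n) :
    T η n ≤ S η n * (1 + Real.log n) :=
  T_le hnonneg n hn
lemma T_incr_le' (η : ℕ → ℝ) (hnonneg : ∀ n : ℕ, 1 ≤ n → 0 ≤ η n) (m n : ℕ) (hm : 1 ≤ m) (h : m ≤ n) :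
    T η n ≤ T η m + S η n * (Real.log n - Real.log m) :=
  T_incr_le hnonneg m n hm h
lemma T_incr_ge' (η : ℕ → ℝ) (hnonneg : ∀ n : ℕ, 1 ≤ n → 0 ≤ η n) (m n : ℕ) (hm : 1 ≤ m) (h : m ≤ n) :
    S η m * (Real.log ((n:ℝ)+1) - Real.log m) ≤ T η n :=
  T_incr_ge hnonneg m n hm h
lemma ratio_eq' (η : ℕ → ℝ) (n : ℕ) (hn : 1 ≤ n) : am2 η n / am η n = T η n / S η n :=
  ratio_eq n hn

section main
variable {η : ℕ → ℝ} (hmono : ∀ n : ℕ, 1 ≤ n → η (n + 1) ≤ η n)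
  (hnonneg : ∀ n : ℕ, 1 ≤ n → 0 ≤ η n) (h1 : 0 < η 1)






include hnonneg h1 in
lemma step_lemma (α' : ℝ) (hα : 0 < α')
    (hbd : ∀ n : ℕ, 2 ≤ n → α' * Real.log n ≤ T η n / S η n)
    (n N : ℕ) (h2 : 2 ≤ n) (hnN : n ≤ N)
    (hlog : Real.log N ≤ (1 + α'/2) * Real.log n) :
    S η N ≤ ((2/α') * (1 + 1/Real.log 2)) * S η n := by
  have hlog2 : (0:ℝ) < Real.log 2 := Real.log_pos (by norm_num)
  have hN2 : 2 ≤ N := le_trans h2 hnN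
  have hSN : 0 < S η N := S_pos' η hnonneg h1 N (by omega)
  have hSn : 0 < S η n := S_pos' η hnonneg h1 n (by omega)
  have hlognn : Real.log 2 ≤ Real.log n := by
    apply Real.log_le_log (by norm_num); exact_mod_cast h2
  have hlogn0 : 0 < Real.log n := lt_of_lt_of_le hlog2 hlognn
  have hlogNn : Real.log n ≤ Real.log N := by
    apply Real.log_le_log (by positivity); exact_mod_cast hnN
  have hlow : α' * Real.log N * S η N ≤ T η N := by
    have := hbd N hN2
    rwa [le_div_iff₀ hSN] at this
  have hTn := T_le' η hnonneg n (by omega)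
  have hIncr := T_incr_le' η hnonneg n N (by omega) hnN
  -- (α' log N + log n - log N) S N ≤ S n (1 + log n)
  have hA : (α' * Real.log N + Real.log n - Real.log N) * S η N ≤ S η n * (1 + Real.log n) := by
    nlinarith [hlow, hIncr, hTn]
  have hkey : (α'/2) * Real.log n ≤ α' * Real.log N + Real.log n - Real.log N := by
    nlinarith [mul_le_mul_of_nonneg_left hlogNn hα.le, hlog]
  have hB : (α'/2) * Real.log n * S η N ≤ S η n * (1 + Real.log n) :=
    le_trans (mul_le_mul_of_nonneg_right hkey hSN.le) hA
  have hC : 1 + Real.log n ≤ (1 + 1/Real.log 2) * Real.log n := by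
    have h02 : (1:ℝ) ≤ (1/Real.log 2) * Real.log n := by
      rw [one_div_mul_eq_div]
      exact (one_le_div hlog2).mpr hlognn
    nlinarith [h02]
  have hD : (α'/2) * Real.log n * S η N ≤ S η n * ((1 + 1/Real.log 2) * Real.log n) :=
    le_trans hB (mul_le_mul_of_nonneg_left hC hSn.le)
  have hE : (α'/2) * Real.log n * S η N =
      (α'/2) * Real.log n * (S η N) := rfl
  have hfin : S η N ≤ ((2/α') * (1 + 1/Real.log 2)) * S η n := by
    rw [← mul_le_mul_iff_right₀ (show (0:ℝ) < (α'/2) * Real.log n by positivity)]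
    calc (α'/2) * Real.log n * S η N ≤ S η n * ((1 + 1/Real.log 2) * Real.log n) := hD
      _ = (α'/2) * Real.log n * ((2/α') * (1 + 1/Real.log 2) * S η n) := by
          field_simp
  exact hfin
end main

lemma step_lemma' (η : ℕ → ℝ) (hnonneg : ∀ n : ℕ, 1 ≤ n → 0 ≤ η n) (h1 : 0 < η 1)
    (α' : ℝ) (hα : 0 < α')
    (hbd : ∀ n : ℕ, 2 ≤ n → α' * Real.log n ≤ T η n / S η n)
    (n N : ℕ) (h2 : 2 ≤ n) (hnN : n ≤ N)
    (hlog : Real.log N ≤ (1 + α'/2) * Real.log n) :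
    S η N ≤ ((2/α') * (1 + 1/Real.log 2)) * S η n :=
  step_lemma hnonneg h1 α' hα hbd n N h2 hnN hlog

section main
variable {η : ℕ → ℝ} (hmono : ∀ n : ℕ, 1 ≤ n → η (n + 1) ≤ η n)
  (hnonneg : ∀ n : ℕ, 1 ≤ n → 0 ≤ η n) (h1 : 0 < η 1)





include hnonneg h1 in
lemma forward (α' : ℝ) (hα : 0 < α')
    (hbd : ∀ n : ℕ, 2 ≤ n → α' * Real.log n ≤ T η n / S η n) :
    ∃ c : ℝ, 0 < c ∧ ∀ m : ℕ, 1 ≤ m → S η (m ^ 2) ≤ c * S η m := by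
  set δ : ℝ := α'/2 with hδdef
  have hδ : 0 < δ := by positivity
  set C : ℝ := (2/α') * (1 + 1/Real.log 2) with hCdef
  have hlog2 : (0:ℝ) < Real.log 2 := Real.log_pos (by norm_num)
  have hC : 0 < C := by positivity
  -- threshold
  set M : ℕ := max 2 ⌈(2:ℝ) ^ ((2:ℝ)/δ)⌉₊ with hMdef
  obtain ⟨k, hk⟩ : ∃ k : ℕ, (2:ℝ) < (1 + δ/2)^k :=
    pow_unbounded_of_one_lt 2 (by linarith)
  -- the chain for large m
  have hbig : ∀ m : ℕ, M ≤ m → S η (m ^ 2) ≤ C^k * S η m := by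
    intro m hMm
    have hm2 : 2 ≤ m := le_trans (le_max_left _ _) hMm
    have hmR : (2:ℝ) ≤ (m:ℝ) := by exact_mod_cast hm2
    have hmceil : (2:ℝ) ^ ((2:ℝ)/δ) ≤ (m:ℝ) := by
      apply le_trans (Nat.le_ceil _)
      exact_mod_cast le_trans (le_max_right _ _) hMm
    set g : ℕ → ℕ := fun i => Nat.rec m (fun _ x => ⌊(x:ℝ) ^ ((1:ℝ)+δ)⌋₊) i with hgdef
    have hg0 : g 0 = m := rfl
    have hgs : ∀ i, g (i+1) = ⌊((g i : ℕ):ℝ) ^ ((1:ℝ)+δ)⌋₊ := fun i => rfl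
    have main : ∀ i : ℕ, m ≤ g i ∧ (1+δ/2)^i * Real.log m ≤ Real.log (g i) ∧
        S η (g i) ≤ C^i * S η m := by
      intro i
      induction i with
      | zero =>
          refine ⟨le_refl m, ?_, ?_⟩
          · rw [hg0]; simp
          · rw [hg0]; simp
      | succ i ih =>
          obtain ⟨ih1, ih2, ih3⟩ := ih
          set n : ℕ := g i with hn
          have hn2 : 2 ≤ n := le_trans hm2 ih1
          have hnR : (2:ℝ) ≤ (n:ℝ) := by exact_mod_cast hn2
          have hnpos : (0:ℝ) < n := by linarith
          set x : ℝ := (n:ℝ) ^ ((1:ℝ)+δ) with hx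
          have hxpos : 0 < x := Real.rpow_pos_of_pos hnpos _
          have hx1 : (n:ℝ) ≤ x := by
            calc (n:ℝ) = (n:ℝ) ^ (1:ℝ) := (Real.rpow_one _).symm
              _ ≤ x := Real.rpow_le_rpow_of_exponent_le (by linarith) (by linarith)
          have hfl_ge : n ≤ g (i+1) := by
            rw [hgs i, ← hn]
            exact Nat.le_floor hx1
          have hm_le : m ≤ g (i+1) := le_trans ih1 hfl_ge
          have hgp : (0:ℝ) < (g (i+1) : ℝ) := by
            have : 2 ≤ g (i+1) := le_trans hn2 hfl_ge
            exact_mod_cast lt_of_lt_of_le (by norm_num : (0:ℕ) < 2) this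
          have hfl_le : ((g (i+1) : ℕ):ℝ) ≤ x := by
            rw [hgs i, ← hn]
            exact Nat.floor_le hxpos.le
          -- upper log bound
          have hlogup : Real.log (g (i+1)) ≤ (1+δ) * Real.log n := by
            calc Real.log (g (i+1)) ≤ Real.log x := Real.log_le_log hgp hfl_le
              _ = (1+δ) * Real.log n := Real.log_rpow hnpos _
          -- n^{δ/2} ≥ 2
          have hpw : (2:ℝ) ≤ (n:ℝ) ^ (δ/2) := by
            have h5 : ((2:ℝ) ^ ((2:ℝ)/δ)) ^ (δ/2) ≤ (n:ℝ) ^ (δ/2) := by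
              apply Real.rpow_le_rpow (by positivity) _ (by positivity)
              calc (2:ℝ) ^ ((2:ℝ)/δ) ≤ (m:ℝ) := hmceil
                _ ≤ (n:ℝ) := by exact_mod_cast ih1
            have h6 : ((2:ℝ) ^ ((2:ℝ)/δ)) ^ (δ/2) = 2 := by
              rw [← Real.rpow_mul (by norm_num)]
              rw [show (2:ℝ)/δ * (δ/2) = 1 by field_simp]
              exact Real.rpow_one 2
            linarith [h6 ▸ h5]
          -- x ≥ n^{1+δ/2} + 1
          have hxsplit : x = (n:ℝ) ^ ((1:ℝ)+δ/2) * (n:ℝ) ^ (δ/2) := by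
            rw [hx, ← Real.rpow_add hnpos]
            congr 1
            ring
          have hA_ge : (n:ℝ) ≤ (n:ℝ) ^ ((1:ℝ)+δ/2) := by
            calc (n:ℝ) = (n:ℝ) ^ (1:ℝ) := (Real.rpow_one _).symm
              _ ≤ _ := Real.rpow_le_rpow_of_exponent_le (by linarith) (by linarith)
          have hx_ge : (n:ℝ) ^ ((1:ℝ)+δ/2) + 1 ≤ x := by
            rw [hxsplit]
            nlinarith [hA_ge, hpw, hnR]
          have hfloor_gt : (n:ℝ) ^ ((1:ℝ)+δ/2) < (g (i+1) : ℝ) := by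
            have h7 : x - 1 < (g (i+1) : ℝ) := by
              rw [hgs i, ← hn]
              exact Nat.sub_one_lt_floor x
            linarith
          have hloglow : (1+δ/2) * Real.log n ≤ Real.log (g (i+1)) := by
            calc (1+δ/2) * Real.log n = Real.log ((n:ℝ) ^ ((1:ℝ)+δ/2)) :=
                  (Real.log_rpow hnpos _).symm
              _ ≤ Real.log (g (i+1)) :=
                  Real.log_le_log (Real.rpow_pos_of_pos hnpos _) hfloor_gt.le
          refine ⟨hm_le, ?_, ?_⟩
          · calc (1+δ/2)^(i+1) * Real.log m = (1+δ/2) * ((1+δ/2)^i * Real.log m) := by ring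
              _ ≤ (1+δ/2) * Real.log n := by
                  apply mul_le_mul_of_nonneg_left ih2 (by positivity)
              _ ≤ Real.log (g (i+1)) := hloglow
          · calc S η (g (i+1)) ≤ C * S η n :=
                  step_lemma' η hnonneg h1 α' hα hbd n (g (i+1)) hn2 hfl_ge
                    (by rw [hδdef] at hlogup; exact hlogup)
              _ ≤ C * (C^i * S η m) := mul_le_mul_of_nonneg_left ih3 hC.le
              _ = C^(i+1) * S η m := by ring
    -- conclude for this m
    obtain ⟨hgk1, hgk2, hgk3⟩ := main k
    have hlogm : 0 ≤ Real.log m := Real.log_nonneg (by exact_mod_cast le_trans one_le_two hm2)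
    have h2log : 2 * Real.log m ≤ Real.log (g k) :=
      le_trans (mul_le_mul_of_nonneg_right hk.le hlogm) hgk2
    have hm2le : (m:ℕ)^2 ≤ g k := by
      have hgkpos : (0:ℝ) < ((g k : ℕ):ℝ) := by
        have : 2 ≤ g k := le_trans hm2 hgk1
        exact_mod_cast lt_of_lt_of_le (by norm_num : (0:ℕ) < 2) this
      have hm2pos : (0:ℝ) < ((m^2 : ℕ):ℝ) := by positivity
      have hlogm2 : Real.log ((m^2 : ℕ):ℝ) = 2 * Real.log m := by
        push_cast
        rw [Real.log_pow]
        norm_num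
      have := (Real.log_le_log_iff hm2pos hgkpos).mp (by rw [hlogm2]; exact h2log)
      exact_mod_cast this
    calc S η (m^2) ≤ S η (g k) := S_mono' η hnonneg _ _ hm2le
      _ ≤ C^k * S η m := hgk3
  -- assemble the constant
  set c : ℝ := C^k + 1 + ∑ i ∈ Icc 1 M, S η (i^2) / S η i with hcdef
  have hsum_nonneg : 0 ≤ ∑ i ∈ Icc 1 M, S η (i^2) / S η i :=
    Finset.sum_nonneg fun i _ => div_nonneg (S_nonneg' η hnonneg _) (S_nonneg' η hnonneg _)
  have hCk : 0 < C^k := by positivity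
  refine ⟨c, by rw [hcdef]; linarith, ?_⟩
  intro m hm1
  by_cases hcase : m ≤ M
  · have hterm : S η (m^2) / S η m ≤ ∑ i ∈ Icc 1 M, S η (i^2) / S η i :=
      Finset.single_le_sum (f := fun i => S η (i^2) / S η i)
        (fun i _ => div_nonneg (S_nonneg' η hnonneg _) (S_nonneg' η hnonneg _))
        (Finset.mem_Icc.mpr ⟨hm1, hcase⟩)
    have hSm : 0 < S η m := S_pos' η hnonneg h1 m hm1
    have hrc : S η (m^2) / S η m ≤ c := by
      calc S η (m^2) / S η m ≤ ∑ i ∈ Icc 1 M, S η (i^2) / S η i := hterm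
        _ ≤ c := by rw [hcdef]; linarith
    calc S η (m^2) = (S η (m^2) / S η m) * S η m := by field_simp
      _ ≤ c * S η m := mul_le_mul_of_nonneg_right hrc hSm.le
  · have hMm : M ≤ m := by omega
    calc S η (m^2) ≤ C^k * S η m := hbig m hMm
      _ ≤ c * S η m := by
          apply mul_le_mul_of_nonneg_right _ (S_nonneg' η hnonneg m)
          rw [hcdef]; linarith
end main

section main
variable {η : ℕ → ℝ} (hmono : ∀ n : ℕ, 1 ≤ n → η (n + 1) ≤ η n)
  (hnonneg : ∀ n : ℕ, 1 ≤ n → 0 ≤ η n) (h1 : 0 < η 1)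









include hmono hnonneg h1 in
lemma backward (c : ℝ) (hc : 0 < c)
    (hΔ : ∀ m : ℕ, 1 ≤ m → S η (m ^ 2) ≤ c * S η m) :
    ∃ α β : ℝ, 0 < α ∧ 0 < β ∧ ∀ n : ℕ, 2 ≤ n →
      α * Real.log n ≤ am2 η n / am η n ∧ am2 η n / am η n ≤ β * Real.log n := by
  have hlog2 : (0:ℝ) < Real.log 2 := Real.log_pos (by norm_num)
  have hlog16 : (0:ℝ) < Real.log 16 := Real.log_pos (by norm_num)
  refine ⟨min (1/(4*c)) (1/Real.log 16), 1 + 1/Real.log 2, ?_, ?_, ?_⟩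
  · exact lt_min (by positivity) (by positivity)
  · positivity
  intro n hn
  have hn1 : 1 ≤ n := by omega
  have hSn : 0 < S η n := S_pos' η hnonneg h1 n hn1
  have hlogn : Real.log 2 ≤ Real.log n := by
    apply Real.log_le_log (by norm_num)
    exact_mod_cast hn
  have hlogn0 : 0 < Real.log n := lt_of_lt_of_le hlog2 hlogn
  rw [ratio_eq' η n hn1]
  constructor
  · -- lower bound
    rw [le_div_iff₀ hSn]
    by_cases h16 : 16 ≤ n
    · -- large n
      set m := Nat.sqrt n + 1 with hm
      have hm1 : 1 ≤ m := by omega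
      have hmn : m ≤ n := Nat.sqrt_lt_self (by omega)
      have hnm2 : n ≤ m ^ 2 := by
        have := Nat.lt_succ_sqrt n
        have : n < m * m := this
        nlinarith [this, sq_nonneg m]
      have hSm : S η n / c ≤ S η m := by
        rw [div_le_iff₀ hc]
        calc S η n ≤ S η (m ^ 2) := S_mono' η hnonneg n (m^2) hnm2
          _ ≤ c * S η m := hΔ m hm1
          _ = S η m * c := by ring
      have hT := T_incr_ge' η hnonneg m n hm1 hmn
      have hsq : ((Nat.sqrt n : ℕ):ℝ) ≤ Real.sqrt n := by
        rw [Real.le_sqrt (by positivity) (by positivity)]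
        exact_mod_cast Nat.sqrt_le' n
      have hsq1 : (1:ℝ) ≤ Real.sqrt n := Real.one_le_sqrt.mpr (by exact_mod_cast hn1)
      have hm2 : (m:ℝ) ≤ 2 * Real.sqrt n := by
        push_cast [hm]
        linarith
      have hmpos : (0:ℝ) < m := by exact_mod_cast hm1
      have hlogm : Real.log m ≤ Real.log 2 + Real.log n / 2 := by
        calc Real.log m ≤ Real.log (2 * Real.sqrt n) := Real.log_le_log hmpos hm2
          _ = Real.log 2 + Real.log (Real.sqrt n) := Real.log_mul (by norm_num) (by positivity)
          _ = Real.log 2 + Real.log n / 2 := by rw [Real.log_sqrt (by positivity)]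
      have hlog16n : Real.log 16 ≤ Real.log n := by
        apply Real.log_le_log (by norm_num)
        exact_mod_cast h16
      have h164 : Real.log 16 = 4 * Real.log 2 := by
        rw [show (16:ℝ) = 2^(4:ℕ) by norm_num, Real.log_pow]
        norm_num
      have hlogn1 : Real.log n ≤ Real.log ((n:ℝ)+1) := by
        apply Real.log_le_log (by positivity)
        linarith
      have hloglow : Real.log n / 4 ≤ Real.log ((n:ℝ)+1) - Real.log m := by
        have h4log2 : 4 * Real.log 2 ≤ Real.log n := h164 ▸ hlog16n
        linarith
      have hkey : (S η n / c) * (Real.log n / 4) ≤ T η n := by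
        calc (S η n / c) * (Real.log n / 4)
            ≤ S η m * (Real.log ((n:ℝ)+1) - Real.log m) := by
              apply mul_le_mul hSm hloglow (by positivity)
              exact S_nonneg' η hnonneg m
          _ ≤ T η n := hT
      have hminle : min (1/(4*c)) (1/Real.log 16) ≤ 1/(4*c) := min_le_left _ _
      have heq : (1/(4*c)) * Real.log n * S η n = (S η n / c) * (Real.log n / 4) := by
        field_simp
      nlinarith [hminle, hlogn0, hSn, hkey, heq,
        mul_le_mul_of_nonneg_right (mul_le_mul_of_nonneg_right hminle hlogn0.le) hSn.le]
    · -- small n : n ≤ 15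
      have hTS := T_ge_S' η hmono hnonneg n hn1
      have hlogle : Real.log n ≤ Real.log 16 := by
        apply Real.log_le_log (by positivity)
        have : n ≤ 16 := by omega
        exact_mod_cast this
      have h5 : min (1/(4*c)) (1/Real.log 16) * Real.log n ≤ 1 := by
        calc min (1/(4*c)) (1/Real.log 16) * Real.log n
            ≤ (1/Real.log 16) * Real.log n :=
              mul_le_mul_of_nonneg_right (min_le_right _ _) hlogn0.le
          _ ≤ (1/Real.log 16) * Real.log 16 := by
              apply mul_le_mul_of_nonneg_left hlogle (by positivity)
          _ = 1 := by field_simp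
      nlinarith [hSn, hTS, h5]
  · -- upper bound
    rw [div_le_iff₀ hSn]
    have h2 := T_le' η hnonneg n hn1
    have h3 : 1 + Real.log n ≤ (1 + 1/Real.log 2) * Real.log n := by
      have : 1 ≤ Real.log n / Real.log 2 := (one_le_div hlog2).mpr hlogn
      have h4 : Real.log n / Real.log 2 = (1/Real.log 2) * Real.log n := by ring
      nlinarith
    nlinarith [S_nonneg' η hnonneg n]
end main

end Stmt15Aux

theorem stmt_15 (η : ℕ → ℝ)
    (hmono : ∀ n : ℕ, 1 ≤ n → η (n + 1) ≤ η n)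
    (hnonneg : ∀ n : ℕ, 1 ≤ n → 0 ≤ η n)
    (h1 : 0 < η 1)
    (hlim : Tendsto η atTop (nhds 0)) :
    (∃ α β : ℝ, 0 < α ∧ 0 < β ∧ ∀ n : ℕ, 2 ≤ n →
        α * Real.log n ≤ am2 η n / am η n ∧ am2 η n / am η n ≤ β * Real.log n) ↔
    (∃ c : ℝ, 0 < c ∧ ∀ m : ℕ, 1 ≤ m →
        ∑ i ∈ Finset.Icc 1 (m ^ 2), η i ≤ c * ∑ i ∈ Finset.Icc 1 m, η i) := by
  constructor
  · rintro ⟨α, β, hα, hβ, hbd⟩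
    have hbd' : ∀ n : ℕ, 2 ≤ n → α * Real.log n ≤ Stmt15Aux.T η n / Stmt15Aux.S η n := by
      intro n hn
      have h := (hbd n hn).1
      rwa [Stmt15Aux.ratio_eq' η n (by omega)] at h
    obtain ⟨c, hc, hΔ⟩ := Stmt15Aux.forward hnonneg h1 α hα hbd'
    exact ⟨c, hc, fun m hm => hΔ m hm⟩
  · rintro ⟨c, hc, hΔ⟩
    exact Stmt15Aux.backward hmono hnonneg h1 c hc (fun m hm => hΔ m hm)
end

section
/- If a nonzero sequence η ∈ c₀* satisfies the exponential Δ₂-condition sup_m ∑_{i=1}^{m²} η_i / ∑_{i=1}^m η_i < ∞, then its arithmetic mean η_a also satisfies the exponential Δ₂-condition: sup_m ∑_{i=1}^{m²} (η_a)_i / ∑_{i=1}^m (η_a)_i < ∞. -/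
open Finset Filter Real

private lemma harm_cast (n : ℕ) : harm n = (harmonic n : ℝ) := by
  rw [harm, harmonic_eq_sum_Icc]
  push_cast
  simp [one_div]

private lemma harm_ub (n : ℕ) : harm n ≤ 1 + Real.log n := by
  rw [harm_cast]; exact harmonic_le_one_add_log n

private lemma harm_lb (n : ℕ) : Real.log n ≤ harm n := by
  rcases Nat.eq_zero_or_pos n with h | h
  · simp [h, harm]
  · rw [harm_cast]
    calc Real.log n ≤ Real.log (n + 1) := by
          apply Real.log_le_log (by exact_mod_cast h); linarith
      _ ≤ _ := by
          have := log_add_one_le_harmonic n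
          push_cast at this ⊢
          linarith

theorem stmt_16 (η : ℕ → ℝ)
    (hmono : ∀ n : ℕ, 1 ≤ n → η (n + 1) ≤ η n)
    (hnonneg : ∀ n : ℕ, 1 ≤ n → 0 ≤ η n)
    (h1 : 0 < η 1)
    (hlim : Tendsto η atTop (nhds 0))
    (hΔ : ∃ c : ℝ, 0 < c ∧ ∀ m : ℕ, 1 ≤ m →
        ∑ i ∈ Finset.Icc 1 (m ^ 2), η i ≤ c * ∑ i ∈ Finset.Icc 1 m, η i) :
    ∃ c' : ℝ, 0 < c' ∧ ∀ m : ℕ, 1 ≤ m →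
        ∑ i ∈ Finset.Icc 1 (m ^ 2), am η i ≤ c' * ∑ i ∈ Finset.Icc 1 m, am η i := by
  obtain ⟨c, hc, hΔ⟩ := hΔ
  set S : ℕ → ℝ := fun n => ∑ i ∈ Finset.Icc 1 n, η i with hSdef
  set T : ℕ → ℝ := fun n => ∑ i ∈ Finset.Icc 1 n, am η i with hTdef
  have hSmono : ∀ a b : ℕ, a ≤ b → S a ≤ S b := by
    intro a b hab
    apply Finset.sum_le_sum_of_subset_of_nonneg (Finset.Icc_subset_Icc_right hab)
    intro i hi _
    exact hnonneg i (Finset.mem_Icc.mp hi).1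
  have hSnonneg : ∀ n, 0 ≤ S n := by
    intro n
    apply Finset.sum_nonneg
    intro i hi
    exact hnonneg i (Finset.mem_Icc.mp hi).1
  have hS1 : S 1 = η 1 := by simp [hSdef]
  have hSpos : ∀ n : ℕ, 1 ≤ n → η 1 ≤ S n := by
    intro n hn
    rw [← hS1]; exact hSmono 1 n hn
  have ham_eq : ∀ i, am η i = S i / i := fun i => rfl
  have ham_nonneg : ∀ i, 0 ≤ am η i := by
    intro i
    rw [ham_eq]
    exact div_nonneg (hSnonneg i) (Nat.cast_nonneg i)
  -- monotone bound η j ≤ η 1 for j ≥ 1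
  have hmono' : ∀ j : ℕ, 1 ≤ j → η j ≤ η 1 := by
    intro j hj
    induction j with
    | zero => omega
    | succ n ih =>
      rcases Nat.lt_or_ge 1 (n + 1) with h | h
      · have hn : 1 ≤ n := by omega
        exact le_trans (hmono n hn) (ih hn)
      · have h' : n + 1 = 1 := by omega
        rw [h']
  have ham_le1 : ∀ i : ℕ, 1 ≤ i → am η i ≤ η 1 := by
    intro i hi
    rw [am]
    rw [div_le_iff₀ (by exact_mod_cast hi : (0:ℝ) < i)]
    calc (∑ j ∈ Finset.Icc 1 i, η j) ≤ ∑ j ∈ Finset.Icc 1 i, η 1 :=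
          Finset.sum_le_sum fun j hj => hmono' j (Finset.mem_Icc.mp hj).1
      _ = η 1 * (i : ℝ) := by
          rw [Finset.sum_const, Nat.card_Icc, Nat.add_sub_cancel, nsmul_eq_mul, mul_comm]
  have hT_ub : ∀ N : ℕ, T N ≤ S N * harm N := by
    intro N
    rw [harm, Finset.mul_sum]
    apply Finset.sum_le_sum
    intro i hi
    have hi1 : 1 ≤ i := (Finset.mem_Icc.mp hi).1
    have hiN : i ≤ N := (Finset.mem_Icc.mp hi).2
    rw [ham_eq, mul_one_div]
    exact div_le_div_of_nonneg_right (hSmono i N hiN) (Nat.cast_nonneg i)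
  have hTη1 : ∀ m : ℕ, 1 ≤ m → η 1 ≤ T m := by
    intro m hm
    have : am η 1 = η 1 := by simp [am]
    calc η 1 = am η 1 := this.symm
      _ ≤ T m := Finset.single_le_sum (f := am η) (fun i _ => ham_nonneg i)
            (Finset.mem_Icc.mpr ⟨le_refl 1, hm⟩)
  have hTnonneg : ∀ m, 0 ≤ T m := fun m =>
    Finset.sum_nonneg fun i _ => ham_nonneg i
  refine ⟨8 * c ^ 2 + 22500, by positivity, ?_⟩
  intro m hm
  by_cases hsmall : m < 150
  · -- small case
    have hub : T (m ^ 2) ≤ (m:ℝ) ^ 2 * η 1 := by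
      calc T (m ^ 2) ≤ ∑ i ∈ Finset.Icc 1 (m ^ 2), η 1 :=
            Finset.sum_le_sum fun i hi => ham_le1 i (Finset.mem_Icc.mp hi).1
        _ = (m:ℝ)^2 * η 1 := by
            rw [Finset.sum_const, Nat.card_Icc]
            push_cast
            ring_nf
    have h2 : (m:ℝ)^2 * η 1 ≤ 22500 * η 1 := by
      have hm150 : (m:ℝ) ≤ 150 := by exact_mod_cast hsmall.le
      have hm0' : (0:ℝ) ≤ (m:ℝ) := Nat.cast_nonneg m
      have hsq : (m:ℝ)^2 ≤ 22500 := by nlinarith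
      exact mul_le_mul_of_nonneg_right hsq h1.le
    have h3 : η 1 ≤ T m := hTη1 m hm
    have h4 : 0 ≤ T m := hTnonneg m
    nlinarith [sq_nonneg c]
  · -- main case: m ≥ 150
    push_neg at hsmall
    set s := Nat.sqrt m with hsdef
    have hs1 : 1 ≤ s := Nat.sqrt_pos.mpr (by omega)
    have hsm : s ≤ m := Nat.sqrt_le_self m
    have hmk2 : m ≤ (s + 1) ^ 2 := by
      have := Nat.lt_succ_sqrt m
      nlinarith
    have hs2m : (s:ℝ) ^ 2 ≤ (m:ℝ) := by
      have := Nat.sqrt_le' m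
      push_cast
      exact_mod_cast Nat.sqrt_le' m
    -- log facts
    have hm0 : (0:ℝ) < m := by positivity
    have hL : (5:ℝ) ≤ Real.log m := by
      rw [Real.le_log_iff_exp_le hm0]
      calc Real.exp 5 = Real.exp 1 ^ (5:ℕ) := by
            rw [← Real.exp_nat_mul]; norm_num
        _ ≤ 2.7182818286 ^ (5:ℕ) := by
            apply pow_le_pow_left₀ (Real.exp_pos 1).le Real.exp_one_lt_d9.le
        _ ≤ (m:ℝ) := by
            have : (150:ℝ) ≤ (m:ℝ) := by exact_mod_cast hsmall
            nlinarith
    have hlogs : Real.log s ≤ Real.log m / 2 := by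
      have hspos : (0:ℝ) < (s:ℝ) := by exact_mod_cast (by omega : 0 < s)
      have h2 : Real.log ((s:ℝ)^2) ≤ Real.log m := Real.log_le_log (by positivity) hs2m
      rw [Real.log_pow] at h2
      push_cast at h2
      linarith
    -- harm facts
    have hharm_ub : harm (m ^ 2) ≤ 1 + 2 * Real.log m := by
      calc harm (m ^ 2) ≤ 1 + Real.log ((m:ℕ)^2 : ℕ) := harm_ub (m ^ 2)
        _ = 1 + 2 * Real.log m := by
            push_cast
            rw [Real.log_pow]
            push_cast; ring
    have hharm_lb : Real.log m / 2 - 1 ≤ harm m - harm s := by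
      have h1' := harm_lb m
      have h2' := harm_ub s
      linarith
    -- decomposition: harm m - harm s = ∑_{Ioc s m} 1/i
    have hdecomp : harm m - harm s = ∑ i ∈ Finset.Ioc s m, (1:ℝ) / i := by
      have : harm s + ∑ i ∈ Finset.Ioc s m, (1:ℝ) / i = harm m := by
        rw [harm, harm]
        rw [show Finset.Icc 1 s = Finset.Ioc 0 s from rfl,
            show Finset.Icc 1 m = Finset.Ioc 0 m from rfl]
        exact Finset.sum_Ioc_consecutive _ (Nat.zero_le s) hsm
      linarith
    -- T m lower bound
    have hTm_lb : S (s + 1) * (harm m - harm s) ≤ T m := by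
      rw [hdecomp, Finset.mul_sum]
      calc ∑ i ∈ Finset.Ioc s m, S (s+1) * (1 / (i:ℝ))
          ≤ ∑ i ∈ Finset.Ioc s m, am η i := by
            apply Finset.sum_le_sum
            intro i hi
            obtain ⟨hi1, hi2⟩ := Finset.mem_Ioc.mp hi
            rw [ham_eq, mul_one_div]
            exact div_le_div_of_nonneg_right (hSmono (s+1) i (by omega)) (Nat.cast_nonneg i)
        _ ≤ T m := by
            apply Finset.sum_le_sum_of_subset_of_nonneg
            · intro i hi
              obtain ⟨hi1, hi2⟩ := Finset.mem_Ioc.mp hi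
              exact Finset.mem_Icc.mpr ⟨by omega, hi2⟩
            · intro i _ _; exact ham_nonneg i
    -- Δ₂ applications
    have hd1 : S (m ^ 2) ≤ c * S m := hΔ m hm
    have hd2 : S m ≤ c * S (s + 1) := by
      calc S m ≤ S ((s+1)^2) := hSmono m _ hmk2
        _ ≤ c * S (s+1) := hΔ (s+1) (by omega)
    -- assemble
    have key : T (m ^ 2) ≤ 8 * c ^ 2 * T m := by
      have e1 : T (m ^ 2) ≤ S (m ^ 2) * harm (m ^ 2) := hT_ub (m ^ 2)
      have e2 : S (m ^ 2) * harm (m ^ 2) ≤ (c * S m) * (1 + 2 * Real.log m) := by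
        apply mul_le_mul hd1 hharm_ub ?_ ?_
        · calc (0:ℝ) ≤ Real.log m := by linarith
            _ ≤ harm m := harm_lb m
            _ ≤ harm (m ^ 2) := by
              rw [harm, harm]
              apply Finset.sum_le_sum_of_subset_of_nonneg
              · exact Finset.Icc_subset_Icc_right (by nlinarith)
              · intro i hi _
                exact one_div_nonneg.mpr (Nat.cast_nonneg i)
        · exact mul_nonneg hc.le (hSnonneg m)
      have e3 : (1 + 2 * Real.log m) ≤ 8 * (Real.log m / 2 - 1) := by linarith
      have e4 : (c * S m) * (1 + 2 * Real.log m) ≤ (c * S m) * (8 * (Real.log m / 2 - 1)) := by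
        exact mul_le_mul_of_nonneg_left e3 (mul_nonneg hc.le (hSnonneg m))
      have e5 : (c * S m) * (8 * (Real.log m / 2 - 1)) ≤
          (8 * c) * ((c * S (s+1)) * (harm m - harm s)) := by
        have h01 : (0:ℝ) ≤ Real.log m / 2 - 1 := by linarith
        have hB : (0:ℝ) ≤ c * S (s+1) := mul_nonneg hc.le (hSnonneg _)
        have step1 : S m * (Real.log m / 2 - 1) ≤ (c * S (s+1)) * (harm m - harm s) :=
          mul_le_mul hd2 hharm_lb h01 hB
        calc (c * S m) * (8 * (Real.log m / 2 - 1))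
            = (8 * c) * (S m * (Real.log m / 2 - 1)) := by ring
          _ ≤ (8 * c) * ((c * S (s+1)) * (harm m - harm s)) :=
              mul_le_mul_of_nonneg_left step1 (by positivity)
      have e6 : (8 * c) * ((c * S (s+1)) * (harm m - harm s)) ≤ 8 * c ^ 2 * T m := by
        calc (8 * c) * ((c * S (s+1)) * (harm m - harm s))
            = 8 * c ^ 2 * (S (s+1) * (harm m - harm s)) := by ring
          _ ≤ 8 * c ^ 2 * T m := mul_le_mul_of_nonneg_left hTm_lb (by positivity)
      linarith
    have h4 : 0 ≤ T m := hTnonneg m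
    nlinarith [key, h4]
end

section
/- Let η, ξ ∈ c₀* with all terms positive, and suppose r(η_a) = η_{a²}/η_a is equivalent to a monotone sequence (there exist a nondecreasing positive φ and β > 0 with φ ≤ r(η_a) ≤ βφ). If ξ_a/η_a is unbounded, then ξ_{a²}/η_{a²} is unbounded. Equivalently, if ξ_{a²} = O(η_{a²}) then ξ_a = O(η_a). -/
open Finset Filter Real

private lemma aux_anti {ζ : ℕ → ℝ} (h : ∀ n, 1 ≤ n → ζ (n + 1) ≤ ζ n) :
    ∀ a b : ℕ, 1 ≤ a → a ≤ b → ζ b ≤ ζ a := by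
  intro a b ha hab
  induction b, hab using Nat.le_induction with
  | base => exact le_refl _
  | succ m hm ih => exact le_trans (h m (le_trans ha hm)) ih

private lemma aux_mono {ζ : ℕ → ℝ} (h : ∀ n, 1 ≤ n → ζ n ≤ ζ (n + 1)) :
    ∀ a b : ℕ, 1 ≤ a → a ≤ b → ζ a ≤ ζ b := by
  intro a b ha hab
  induction b, hab using Nat.le_induction with
  | base => exact le_refl _
  | succ m hm ih => exact le_trans ih (h m (le_trans ha hm))

private lemma aux_sum_pos {ζ : ℕ → ℝ} (hpos : ∀ n, 1 ≤ n → 0 < ζ n)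
    {n : ℕ} (hn : 1 ≤ n) : 0 < ∑ j ∈ Finset.Icc 1 n, ζ j := by
  apply Finset.sum_pos
  · intro j hj
    exact hpos j (Finset.mem_Icc.mp hj).1
  · exact ⟨1, Finset.mem_Icc.mpr ⟨le_refl 1, hn⟩⟩

private lemma am_pos {ζ : ℕ → ℝ} (hpos : ∀ n, 1 ≤ n → 0 < ζ n)
    {n : ℕ} (hn : 1 ≤ n) : 0 < am ζ n := by
  have h1 : (0:ℝ) < n := by exact_mod_cast hn
  exact div_pos (aux_sum_pos hpos hn) h1

private lemma am_mul {ζ : ℕ → ℝ} {n : ℕ} (hn : 1 ≤ n) :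
    am ζ n * n = ∑ j ∈ Finset.Icc 1 n, ζ j := by
  have h1 : (n:ℝ) ≠ 0 := Nat.cast_ne_zero.mpr (by omega)
  rw [am, div_mul_cancel₀ _ h1]

/-- The arithmetic mean of a positive nonincreasing sequence is nonincreasing. -/
private lemma am_anti {ζ : ℕ → ℝ} (hmono : ∀ n, 1 ≤ n → ζ (n + 1) ≤ ζ n)
    (hpos : ∀ n, 1 ≤ n → 0 < ζ n) :
    ∀ n, 1 ≤ n → am ζ (n + 1) ≤ am ζ n := by
  intro n hn
  have hn0 : (0:ℝ) < n := by exact_mod_cast hn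
  have hn1 : (0:ℝ) < ((n:ℝ) + 1) := by positivity
  have hsplit : ∑ j ∈ Finset.Icc 1 (n+1), ζ j = (∑ j ∈ Finset.Icc 1 n, ζ j) + ζ (n+1) :=
    Finset.sum_Icc_succ_top (by omega) _
  have hkey : (n:ℝ) * ζ (n+1) ≤ ∑ j ∈ Finset.Icc 1 n, ζ j := by
    calc (n:ℝ) * ζ (n+1) = ∑ _j ∈ Finset.Icc 1 n, ζ (n+1) := by
          rw [Finset.sum_const, Nat.card_Icc, nsmul_eq_mul]
          norm_num
    _ ≤ ∑ j ∈ Finset.Icc 1 n, ζ j := by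
          apply Finset.sum_le_sum
          intro j hj
          obtain ⟨hj1, hj2⟩ := Finset.mem_Icc.mp hj
          exact aux_anti hmono j (n+1) hj1 (by omega)
  rw [am, am, div_le_div_iff₀ (by exact_mod_cast Nat.succ_pos n) hn0, hsplit]
  push_cast
  nlinarith [aux_sum_pos hpos hn]

private lemma harm_succ (n : ℕ) : harm (n + 1) = harm n + 1 / ((n:ℝ) + 1) := by
  rw [harm, harm, Finset.sum_Icc_succ_top (by omega)]
  push_cast
  ring

private lemma harm_tendsto : Tendsto harm atTop atTop := by
  have heq : ∀ n, harm n = ∑ i ∈ Finset.range n, (1 / ((i:ℝ) + 1) : ℝ) := by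
    intro n
    induction n with
    | zero => simp [harm]
    | succ m ih => rw [harm_succ, Finset.sum_range_succ, ih]
  have h := Real.tendsto_sum_range_one_div_nat_succ_atTop
  exact Tendsto.congr (fun n => (heq n).symm) h

private lemma inv_one_sub_le {x : ℝ} (h0 : 0 ≤ x) (h2 : x ≤ 1/2) :
    1 / (1 - x) ≤ Real.exp (2 * x) := by
  have h1 : 0 < 1 - x := by linarith
  have hexp : 2 * x + 1 ≤ Real.exp (2 * x) := Real.add_one_le_exp (2 * x)
  rw [div_le_iff₀ h1]
  nlinarith

theorem stmt_18 (η ξ φ : ℕ → ℝ)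
    (hηmono : ∀ n : ℕ, 1 ≤ n → η (n + 1) ≤ η n)
    (hηpos : ∀ n : ℕ, 1 ≤ n → 0 < η n)
    (hηlim : Tendsto η atTop (nhds 0))
    (hξmono : ∀ n : ℕ, 1 ≤ n → ξ (n + 1) ≤ ξ n)
    (hξpos : ∀ n : ℕ, 1 ≤ n → 0 < ξ n)
    (hξlim : Tendsto ξ atTop (nhds 0))
    (hφmono : ∀ n : ℕ, 1 ≤ n → φ n ≤ φ (n + 1))
    (hφpos : ∀ n : ℕ, 1 ≤ n → 0 < φ n)
    (β : ℝ) (hβ : 0 < β)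
    (hequiv : ∀ n : ℕ, 1 ≤ n → φ n ≤ am2 η n / am η n ∧ am2 η n / am η n ≤ β * φ n) :
    (¬ ∃ C : ℝ, ∀ n : ℕ, 1 ≤ n → am ξ n ≤ C * am η n) →
      (¬ ∃ C : ℝ, ∀ n : ℕ, 1 ≤ n → am2 ξ n ≤ C * am2 η n) := by
  intro hun h2bdd
  apply hun
  obtain ⟨C, hC⟩ := h2bdd
  classical
  -- basic positivity facts
  have hamηpos : ∀ n, 1 ≤ n → 0 < am η n := fun n hn => am_pos hηpos hn
  have hamξpos : ∀ n, 1 ≤ n → 0 < am ξ n := fun n hn => am_pos hξpos hn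
  have hamηanti : ∀ n, 1 ≤ n → am η (n + 1) ≤ am η n := am_anti hηmono hηpos
  have ham2ηpos : ∀ n, 1 ≤ n → 0 < am2 η n := fun n hn => am_pos hamηpos hn
  have ham2ξpos : ∀ n, 1 ≤ n → 0 < am2 ξ n := fun n hn => am_pos hamξpos hn
  -- from the equivalence hypothesis
  have hlow : ∀ n, 1 ≤ n → φ n * am η n ≤ am2 η n := by
    intro n hn
    have h := (hequiv n hn).1
    rwa [le_div_iff₀ (hamηpos n hn)] at h
  have hhigh : ∀ n, 1 ≤ n → am2 η n ≤ β * φ n * am η n := by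
    intro n hn
    have h := (hequiv n hn).2
    rwa [div_le_iff₀ (hamηpos n hn)] at h
  have hr1 : ∀ n, 1 ≤ n → am η n ≤ am2 η n := by
    intro n hn
    have hn0 : (0:ℝ) < n := by exact_mod_cast hn
    have hdef : am2 η n = (∑ j ∈ Finset.Icc 1 n, am η j) / n := rfl
    rw [hdef, le_div_iff₀ hn0]
    calc am η n * n = ∑ _j ∈ Finset.Icc 1 n, am η n := by
          rw [Finset.sum_const, Nat.card_Icc, nsmul_eq_mul]
          norm_num [mul_comm]
    _ ≤ ∑ j ∈ Finset.Icc 1 n, am η j := by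
          apply Finset.sum_le_sum
          intro j hj
          obtain ⟨hj1, hj2⟩ := Finset.mem_Icc.mp hj
          exact aux_anti hamηanti j n hj1 hj2
  -- C is positive
  have hC0 : 0 < C := by
    have h1 := hC 1 le_rfl
    nlinarith [ham2ξpos 1 le_rfl, ham2ηpos 1 le_rfl]
  -- notation for the partial sums of am η
  set S : ℕ → ℝ := fun n => ∑ j ∈ Finset.Icc 1 n, am η j with hSdef
  have hSpos : ∀ n, 1 ≤ n → 0 < S n := fun n hn => aux_sum_pos hamηpos hn
  have hSam2 : ∀ n, 1 ≤ n → am2 η n * n = S n := fun n hn => am_mul hn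
  have hSsucc : ∀ m : ℕ, S (m + 1) = S m + am η (m + 1) := by
    intro m
    exact Finset.sum_Icc_succ_top (by omega) _
  -- growth estimate for S
  have hgrow : ∀ n, 1 ≤ n → ∀ m, n ≤ m →
      S m ≤ S n * Real.exp (2 * (harm m - harm n) / φ n) := by
    intro n hn m hm
    induction m, hm using Nat.le_induction with
    | base => simp
    | succ m hm ih =>
      have hm1 : 1 ≤ m := le_trans hn hm
      have hj1 : (1:ℕ) ≤ m + 1 := by omega
      have hj0 : (0:ℝ) < (m:ℝ) + 1 := by positivity
      have hSj : 0 < S (m+1) := hSpos (m+1) hj1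
      have hSm : 0 < S m := hSpos m hm1
      have hφn : 0 < φ n := hφpos n hn
      have hφj : 0 < φ (m+1) := hφpos (m+1) hj1
      have hφnj : φ n ≤ φ (m+1) := aux_mono hφmono n (m+1) hn (by omega)
      have hamj : 0 < am η (m+1) := hamηpos (m+1) hj1
      set x : ℝ := am η (m+1) / S (m+1) with hx
      have hx0 : 0 < x := div_pos hamj hSj
      have ham2S : am2 η (m+1) = S (m+1) / ((m:ℝ) + 1) := by
        have h := hSam2 (m+1) hj1
        rw [eq_div_iff (ne_of_gt hj0)]
        push_cast at h
        linarith
      have hxhalf : x ≤ 1/2 := by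
        have h1 : am η (m+1) ≤ S (m+1) / ((m:ℝ)+1) := by
          rw [← ham2S]; exact hr1 (m+1) hj1
        rw [le_div_iff₀ hj0] at h1
        rw [hx, div_le_iff₀ hSj]
        have hm2 : (2:ℝ) ≤ (m:ℝ) + 1 := by
          have : (2:ℕ) ≤ m + 1 := by omega
          exact_mod_cast this
        nlinarith
      have hxφ : x ≤ 1 / (((m:ℝ)+1) * φ n) := by
        have h1 : φ (m+1) * am η (m+1) ≤ S (m+1) / ((m:ℝ)+1) := by
          rw [← ham2S]; exact hlow (m+1) hj1
        rw [le_div_iff₀ hj0] at h1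
        have h2 : φ n * am η (m+1) ≤ φ (m+1) * am η (m+1) :=
          mul_le_mul_of_nonneg_right hφnj hamj.le
        have h3 : (φ n * am η (m+1)) * ((m:ℝ)+1) ≤ (φ (m+1) * am η (m+1)) * ((m:ℝ)+1) :=
          mul_le_mul_of_nonneg_right h2 hj0.le
        rw [hx, div_le_div_iff₀ hSj (by positivity)]
        nlinarith
      have hxS : S (m+1) * x = am η (m+1) := by
        rw [hx]; field_simp
      have hSrec : S m = S (m+1) * (1 - x) := by
        have h := hSsucc m
        have h2 : S (m+1) * (1 - x) = S (m+1) - am η (m+1) := by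
          rw [mul_one_sub, hxS]
        linarith
      have h1x : 0 < 1 - x := by linarith
      have hstep : S (m+1) ≤ S m * Real.exp (2 * x) := by
        have h2 : S (m+1) = S m / (1 - x) := by
          rw [eq_div_iff (ne_of_gt h1x)]
          linarith [hSrec]
        rw [h2, div_eq_mul_one_div]
        exact mul_le_mul_of_nonneg_left (inv_one_sub_le hx0.le hxhalf) hSm.le
      have hstep2 : S (m+1) ≤ S m * Real.exp (2 / (((m:ℝ)+1) * φ n)) := by
        apply le_trans hstep
        apply mul_le_mul_of_nonneg_left _ hSm.le
        apply Real.exp_le_exp.mpr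
        rw [div_eq_mul_one_div 2]
        exact mul_le_mul_of_nonneg_left hxφ (by norm_num)
      calc S (m+1) ≤ S m * Real.exp (2 / (((m:ℝ)+1) * φ n)) := hstep2
      _ ≤ S n * Real.exp (2 * (harm m - harm n) / φ n) *
            Real.exp (2 / (((m:ℝ)+1) * φ n)) :=
          mul_le_mul_of_nonneg_right ih (Real.exp_pos _).le
      _ = S n * Real.exp (2 * (harm (m+1) - harm n) / φ n) := by
          rw [mul_assoc, ← Real.exp_add]
          congr 2
          rw [harm_succ]
          have hφn' : φ n ≠ 0 := ne_of_gt hφn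
          have hj0' : (m:ℝ) + 1 ≠ 0 := ne_of_gt hj0
          field_simp
          ring
  -- the resulting constant
  refine ⟨C * β * Real.exp (2 + 2 / φ 1), ?_⟩
  intro n hn
  have hn0 : (0:ℝ) < n := by exact_mod_cast hn
  have hφn : 0 < φ n := hφpos n hn
  have hφ1 : 0 < φ 1 := hφpos 1 le_rfl
  have hφ1n : φ 1 ≤ φ n := aux_mono hφmono 1 n le_rfl hn
  -- choose the minimal N with harm N − harm n ≥ φ n
  have hex : ∃ N : ℕ, n ≤ N ∧ harm n + φ n ≤ harm N := by
    have h1 := (harm_tendsto.eventually_ge_atTop (harm n + φ n)).and (eventually_ge_atTop n)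
    obtain ⟨N, hN1, hN2⟩ := h1.exists
    exact ⟨N, hN2, hN1⟩
  obtain ⟨N, hNspec, hNmin⟩ :
      ∃ N, (n ≤ N ∧ harm n + φ n ≤ harm N) ∧
        ∀ m, m < N → ¬(n ≤ m ∧ harm n + φ n ≤ harm m) :=
    ⟨Nat.find hex, Nat.find_spec hex, fun m hm => Nat.find_min hex hm⟩
  obtain ⟨hnN, hharmN⟩ := hNspec
  have hNn : n < N := by
    rcases eq_or_lt_of_le hnN with h | h
    · exfalso; rw [← h] at hharmN; linarith
    · exact h
  have hN1 : 1 ≤ N := by omega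
  have hN0 : (0:ℝ) < N := by exact_mod_cast hN1
  -- upper bound for harm N
  have hharmNle : harm N ≤ harm n + φ n + 1 := by
    obtain ⟨M, rfl⟩ : ∃ M, N = M + 1 := ⟨N - 1, by omega⟩
    have hMn : n ≤ M := by omega
    have hMnot := hNmin M (by omega)
    push_neg at hMnot
    have hM : harm M < harm n + φ n := hMnot hMn
    rw [harm_succ]
    have h1 : 1 / ((M:ℝ) + 1) ≤ 1 := by
      rw [div_le_one (by positivity)]
      have : (1:ℕ) ≤ M + 1 := by omega
      exact_mod_cast this
    linarith
  -- decomposition of harm N - harm n as a sum over Ioc n N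
  have hk : ∀ k : ℕ, harm k = ∑ j ∈ Finset.Ioc 0 k, (1:ℝ)/j := by
    intro k
    rw [harm, ← Finset.Icc_add_one_left_eq_Ioc]
    rfl
  have hsplitharm : harm N - harm n = ∑ j ∈ Finset.Ioc n N, (1:ℝ)/j := by
    have h := Finset.sum_Ioc_consecutive (fun j : ℕ => (1:ℝ)/j) (Nat.zero_le n) hNn.le
    rw [hk, hk]
    linarith
  -- lower bound: am ξ n * (n * φ n) ≤ ∑_{j ≤ N} am ξ j
  have hterm : ∀ j ∈ Finset.Ioc n N, (n:ℝ) * am ξ n * (1/(j:ℝ)) ≤ am ξ j := by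
    intro j hj
    obtain ⟨hj1, hj2⟩ := Finset.mem_Ioc.mp hj
    have hj1' : 1 ≤ j := by omega
    have hjr : (0:ℝ) < j := by exact_mod_cast hj1'
    have hsum : ∑ k ∈ Finset.Icc 1 n, ξ k ≤ ∑ k ∈ Finset.Icc 1 j, ξ k := by
      apply Finset.sum_le_sum_of_subset_of_nonneg
      · exact Finset.Icc_subset_Icc_right (by omega)
      · intro k hk _
        exact (hξpos k (Finset.mem_Icc.mp hk).1).le
    have e1 : am ξ n * n = ∑ k ∈ Finset.Icc 1 n, ξ k := am_mul hn
    have e2 : am ξ j * j = ∑ k ∈ Finset.Icc 1 j, ξ k := am_mul hj1'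
    rw [mul_one_div, div_le_iff₀ hjr]
    nlinarith
  have h1 : am ξ n * ((n:ℝ) * φ n) ≤ ∑ j ∈ Finset.Icc 1 N, am ξ j := by
    have hsub : ∑ j ∈ Finset.Ioc n N, am ξ j ≤ ∑ j ∈ Finset.Icc 1 N, am ξ j := by
      apply Finset.sum_le_sum_of_subset_of_nonneg
      · intro k hk
        obtain ⟨hk1, hk2⟩ := Finset.mem_Ioc.mp hk
        exact Finset.mem_Icc.mpr ⟨by omega, hk2⟩
      · intro k hk _
        exact (hamξpos k (Finset.mem_Icc.mp hk).1).le
    have hs2 : (n:ℝ) * am ξ n * (harm N - harm n) ≤ ∑ j ∈ Finset.Ioc n N, am ξ j := by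
      rw [hsplitharm, Finset.mul_sum]
      exact Finset.sum_le_sum hterm
    have hφle : φ n ≤ harm N - harm n := by linarith
    have hfin : am ξ n * ((n:ℝ) * φ n) ≤ (n:ℝ) * am ξ n * (harm N - harm n) := by
      have hp : (0:ℝ) ≤ ((n:ℝ) * am ξ n) * (harm N - harm n - φ n) :=
        mul_nonneg (mul_pos hn0 (hamξpos n hn)).le (by linarith)
      nlinarith [hp]
    linarith
  -- upper bound via the hypothesis and the growth estimate
  have h2 : ∑ j ∈ Finset.Icc 1 N, am ξ j ≤ C * S N := by
    have e1 : am2 ξ N * N = ∑ j ∈ Finset.Icc 1 N, am ξ j := am_mul hN1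
    calc ∑ j ∈ Finset.Icc 1 N, am ξ j = am2 ξ N * N := e1.symm
    _ ≤ (C * am2 η N) * N := mul_le_mul_of_nonneg_right (hC N hN1) hN0.le
    _ = C * (am2 η N * N) := by ring
    _ = C * S N := by rw [hSam2 N hN1]
  have h3 : S N ≤ S n * Real.exp (2 + 2 / φ 1) := by
    have hg := hgrow n hn N hnN
    have hexp : 2 * (harm N - harm n) / φ n ≤ 2 + 2 / φ 1 := by
      have e1 : harm N - harm n ≤ φ n + 1 := by linarith
      have ha : 2 * (harm N - harm n) / φ n ≤ 2 * (φ n + 1) / φ n := by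
        rw [div_le_div_iff₀ hφn hφn]
        nlinarith
      have hb : 2 * (φ n + 1) / φ n = 2 + 2 / φ n := by
        field_simp
      have hcc : 2 / φ n ≤ 2 / φ 1 := by
        rw [div_le_div_iff₀ hφn hφ1]
        nlinarith
      linarith
    exact le_trans hg (mul_le_mul_of_nonneg_left (Real.exp_le_exp.mpr hexp) (hSpos n hn).le)
  have h4 : S n ≤ (n:ℝ) * (β * φ n * am η n) := by
    calc S n = am2 η n * n := (hSam2 n hn).symm
    _ ≤ (β * φ n * am η n) * n := mul_le_mul_of_nonneg_right (hhigh n hn) hn0.le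
    _ = (n:ℝ) * (β * φ n * am η n) := by ring
  have hK : (0:ℝ) < Real.exp (2 + 2 / φ 1) := Real.exp_pos _
  have hchain : am ξ n * ((n:ℝ) * φ n) ≤
      (C * β * Real.exp (2 + 2 / φ 1)) * am η n * ((n:ℝ) * φ n) := by
    calc am ξ n * ((n:ℝ) * φ n) ≤ ∑ j ∈ Finset.Icc 1 N, am ξ j := h1
    _ ≤ C * S N := h2
    _ ≤ C * (S n * Real.exp (2 + 2 / φ 1)) := mul_le_mul_of_nonneg_left h3 hC0.le
    _ ≤ C * (((n:ℝ) * (β * φ n * am η n)) * Real.exp (2 + 2 / φ 1)) := by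
        apply mul_le_mul_of_nonneg_left _ hC0.le
        exact mul_le_mul_of_nonneg_right h4 hK.le
    _ = (C * β * Real.exp (2 + 2 / φ 1)) * am η n * ((n:ℝ) * φ n) := by ring
  have hnφ : (0:ℝ) < (n:ℝ) * φ n := mul_pos hn0 hφn
  exact le_of_mul_le_mul_right hchain hnφ
end
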